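/- arXiv:2212.12100 — 10 statements merged into one kernel-verified Lean document; each statement's English description precedes it below -/
import Mathlib

section
/- A generalized polyhedral convex set Q = {x ∈ M : ⟨x_i*, x⟩ ≤ α_i, i = 1,…,m}, where M is a closed affine subspace of a locally convex Hausdorff topological vector space X, is a polyhedral convex set (i.e., definable by finitely many continuous linear inequalities alone) if and only if M has finite codimension. -/
open Set Pointwise

def IsPolyhedral {X : Type*} [AddCommGroup X] [Module ℝ X] [TopologicalSpace X]
    (P : Set X) : Prop :=
  ∃ (m : ℕ) (f : Fin m → X →L[ℝ] ℝ) (α : Fin m → ℝ),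
    P = {x : X | ∀ i, f i x ≤ α i}

def IsGPolyhedral {X : Type*} [AddCommGroup X] [Module ℝ X] [TopologicalSpace X]
    (Q : Set X) : Prop :=
  ∃ (P : Set X) (a : X) (L : Submodule ℝ X),
    IsPolyhedral P ∧ IsClosed (L : Set X) ∧ Q = P ∩ (a +ᵥ (L : Set X))

def normalCone {X : Type*} [AddCommGroup X] [Module ℝ X] [TopologicalSpace X]
    (Ω : Set X) (xb : X) : Set (X →L[ℝ] ℝ) :=
  {f | ∀ x ∈ Ω, f (x - xb) ≤ 0}

def gph {X Y : Type*} (F : X → Set Y) : Set (X × Y) := {p | p.2 ∈ F p.1}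

def coderiv {X Y : Type*} [AddCommGroup X] [Module ℝ X] [TopologicalSpace X]
    [AddCommGroup Y] [Module ℝ Y] [TopologicalSpace Y]
    (F : X → Set Y) (xb : X) (yb : Y) (v : Y →L[ℝ] ℝ) : Set (X →L[ℝ] ℝ) :=
  {u | ∀ x : X, ∀ y ∈ F x, u (x - xb) - v (y - yb) ≤ 0}

def epi {X : Type*} (f : X → EReal) : Set (X × ℝ) := {p | f p.1 ≤ (p.2 : EReal)}

def subdiff {X : Type*} [AddCommGroup X] [Module ℝ X] [TopologicalSpace X]
    (f : X → EReal) (xb : X) : Set (X →L[ℝ] ℝ) :=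
  {g | ∀ x : X, ((g (x - xb) : ℝ) : EReal) + f xb ≤ f x}

def singSubdiff {X : Type*} [AddCommGroup X] [Module ℝ X] [TopologicalSpace X]
    (f : X → EReal) (xb : X) : Set (X →L[ℝ] ℝ) :=
  {g | ∀ x : X, ∀ α : ℝ, f x ≤ (α : EReal) → g (x - xb) ≤ 0}

variable {X : Type*} [AddCommGroup X] [Module ℝ X] [TopologicalSpace X]
  [IsTopologicalAddGroup X] [ContinuousSMul ℝ X] [LocallyConvexSpace ℝ X] [T2Space X]
variable {Y : Type*} [AddCommGroup Y] [Module ℝ Y] [TopologicalSpace Y]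
  [IsTopologicalAddGroup Y] [ContinuousSMul ℝ Y] [LocallyConvexSpace ℝ Y] [T2Space Y]
variable {Z : Type*} [AddCommGroup Z] [Module ℝ Z] [TopologicalSpace Z]
  [IsTopologicalAddGroup Z] [ContinuousSMul ℝ Z] [LocallyConvexSpace ℝ Z] [T2Space Z]

lemma isPolyhedral_of_finite {X : Type*} [AddCommGroup X] [Module ℝ X] [TopologicalSpace X]
    {ι : Type*} [Fintype ι] (f : ι → X →L[ℝ] ℝ) (α : ι → ℝ) :
    IsPolyhedral {x : X | ∀ i, f i x ≤ α i} := by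
  let e := Fintype.equivFin ι
  refine ⟨Fintype.card ι, f ∘ e.symm, α ∘ e.symm, ?_⟩
  ext x
  simp only [Set.mem_setOf_eq, Function.comp_apply]
  exact ⟨fun h j => h _, fun h i => by simpa using h (e i)⟩

set_option linter.unusedSectionVars false in
theorem gpcs_is_pcs_iff_finite_codim
    (m : ℕ) (xs : Fin m → X →L[ℝ] ℝ) (α : Fin m → ℝ)
    (a : X) (L : Submodule ℝ X) (hL : IsClosed (L : Set X))
    (Q : Set X)
    (hQ : Q = {x : X | x ∈ a +ᵥ (L : Set X) ∧ ∀ i, xs i x ≤ α i})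
    (hne : Q.Nonempty) :
    IsPolyhedral Q ↔ FiniteDimensional ℝ (X ⧸ L) := by
  constructor
  · rintro ⟨k, f, β, hP⟩
    obtain ⟨q, hq⟩ := hne
    set F : X →ₗ[ℝ] (Fin k → ℝ) := LinearMap.pi (fun j => (f j : X →ₗ[ℝ] ℝ)) with hF
    have hKL : LinearMap.ker F ≤ L := by
      intro v hv
      have hv' : ∀ j, f j v = 0 := fun j => congrFun hv j
      have hqQ : ∀ j, f j q ≤ β j := by rw [hP] at hq; exact hq
      have hqv : q + v ∈ Q := by
        rw [hP]; intro j; simpa [map_add, hv' j] using hqQ j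
      rw [hQ] at hq hqv
      obtain ⟨l1, hl1, hl1'⟩ := hq.1
      obtain ⟨l2, hl2, hl2'⟩ := hqv.1
      have hveq : v = l2 - l1 := by
        have h : a + l1 + v = a + l2 := by
          rw [show a + l1 = q from hl1', show a + l2 = q + v from hl2']
        have : l1 + v = l2 := by
          apply add_left_cancel (a := a); rw [← add_assoc]; exact h
        rw [← this]; abel
      rw [hveq]; exact L.sub_mem hl2 hl1
    have hQK : FiniteDimensional ℝ (X ⧸ LinearMap.ker F) := by
      have : FiniteDimensional ℝ (LinearMap.range F) := inferInstance
      exact Module.Finite.equiv (LinearMap.quotKerEquivRange F).symm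
    have hsurj : Function.Surjective
        (Submodule.mapQ (LinearMap.ker F) L LinearMap.id hKL) := by
      intro y
      obtain ⟨x, rfl⟩ := Submodule.mkQ_surjective L y
      exact ⟨(LinearMap.ker F).mkQ x, by simp [Submodule.mapQ_apply]⟩
    exact Module.Finite.of_surjective _ hsurj
  · intro hfd
    haveI : T2Space (X ⧸ L) := by infer_instance
    let n := Module.finrank ℝ (X ⧸ L)
    let b : Module.Basis (Fin n) ℝ (X ⧸ L) := Module.finBasis ℝ (X ⧸ L)
    let π : X →L[ℝ] (X ⧸ L) := ⟨L.mkQ, continuous_quot_mk⟩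
    let g : Fin n → X →L[ℝ] ℝ :=
      fun i => (LinearMap.toContinuousLinearMap (b.coord i)).comp π
    have hmem : ∀ x : X, x ∈ a +ᵥ (L : Set X) ↔ ∀ i, g i x = g i a := by
      intro x
      have h1 : x ∈ a +ᵥ (L : Set X) ↔ x - a ∈ L := by
        constructor
        · rintro ⟨l, hl, rfl⟩; simpa using hl
        · intro h; exact ⟨x - a, h, by simp⟩
      rw [h1]
      have h2 : x - a ∈ L ↔ L.mkQ (x - a) = 0 := by
        rw [← Submodule.Quotient.mk_eq_zero]; rfl
      rw [h2, ← b.forall_coord_eq_zero_iff]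
      constructor
      · intro h i
        have : b.coord i (L.mkQ x - L.mkQ a) = 0 := by rw [← map_sub]; exact h i
        have := sub_eq_zero.mp (by rw [map_sub] at this; exact this)
        exact this
      · intro h i
        have : b.coord i (L.mkQ x) = b.coord i (L.mkQ a) := h i
        rw [map_sub, map_sub, this, sub_self]
    have key : Q = {x : X | ∀ j : Fin m ⊕ (Fin n ⊕ Fin n),
        (Sum.elim xs (Sum.elim g (fun i => -g i)) j) x ≤
        (Sum.elim α (Sum.elim (fun i => g i a) (fun i => -(g i a))) j) } := by
      rw [hQ]
      ext x
      simp only [Set.mem_setOf_eq]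
      constructor
      · rintro ⟨hx1, hx2⟩ j
        rcases j with j | j | j
        · exact hx2 j
        · exact le_of_eq ((hmem x).mp hx1 j)
        · simp only [Sum.elim_inr, Sum.elim_inl, ContinuousLinearMap.neg_apply]
          exact neg_le_neg (le_of_eq ((hmem x).mp hx1 j).symm)
      · intro h
        refine ⟨(hmem x).mpr fun i => ?_, fun i => h (Sum.inl i)⟩
        have h1 := h (Sum.inr (Sum.inl i))
        have h2 := h (Sum.inr (Sum.inr i))
        simp only [Sum.elim_inr, Sum.elim_inl, ContinuousLinearMap.neg_apply] at h1 h2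
        linarith
    rw [key]
    exact isPolyhedral_of_finite _ _
end

section
/- A closed linear subspace M of a locally convex Hausdorff topological vector space X is a polyhedral convex set if and only if M has finite codimension in X. -/
open Set Pointwise

variable {X : Type*} [AddCommGroup X] [Module ℝ X] [TopologicalSpace X]
  [IsTopologicalAddGroup X] [ContinuousSMul ℝ X] [LocallyConvexSpace ℝ X] [T2Space X]
variable {Y : Type*} [AddCommGroup Y] [Module ℝ Y] [TopologicalSpace Y]
  [IsTopologicalAddGroup Y] [ContinuousSMul ℝ Y] [LocallyConvexSpace ℝ Y] [T2Space Y]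
variable {Z : Type*} [AddCommGroup Z] [Module ℝ Z] [TopologicalSpace Z]
  [IsTopologicalAddGroup Z] [ContinuousSMul ℝ Z] [LocallyConvexSpace ℝ Z] [T2Space Z]

theorem closed_subspace_polyhedral_iff_finite_codim
    (L : Submodule ℝ X) (hL : IsClosed (L : Set X)) :
    IsPolyhedral (L : Set X) ↔ FiniteDimensional ℝ (X ⧸ L) := by
  constructor
  · rintro ⟨m, f, α, hP⟩
    have hα : ∀ i, 0 ≤ α i := by
      intro i
      have h0 : (0 : X) ∈ (L : Set X) := L.zero_mem
      rw [hP] at h0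
      simpa using h0 i
    have hker : ∀ x ∈ L, ∀ i, f i x = 0 := by
      intro x hx i
      by_contra h
      have ht : ∀ t : ℝ, t * f i x ≤ α i := by
        intro t
        have hsm : t • x ∈ (L : Set X) := L.smul_mem t hx
        rw [hP] at hsm
        simpa using hsm i
      have := ht ((α i + 1) / f i x)
      rw [div_mul_cancel₀ _ h] at this
      linarith
    set F : X →ₗ[ℝ] (Fin m → ℝ) := LinearMap.pi (fun i => (f i : X →ₗ[ℝ] ℝ)) with hF
    have hLF : L = LinearMap.ker F := by
      ext x
      simp only [LinearMap.mem_ker, hF, LinearMap.pi_apply, funext_iff, Pi.zero_apply,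
        ContinuousLinearMap.coe_coe]
      constructor
      · intro hx i; exact hker x hx i
      · intro hx
        have hmem : x ∈ {x : X | ∀ i, f i x ≤ α i} := fun i => (hx i).le.trans (hα i)
        rw [← hP] at hmem; exact hmem
    rw [hLF]
    exact Module.Finite.equiv F.quotKerEquivRange.symm
  · intro h
    haveI := h
    haveI : IsClosed ((L.toAddSubgroup : AddSubgroup X) : Set X) := hL
    set n := Module.finrank ℝ (X ⧸ L) with hn
    let b := Module.finBasis ℝ (X ⧸ L)
    let g : Fin n → X →L[ℝ] ℝ := fun i =>
      { toLinearMap := (b.coord i).comp L.mkQ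
        cont := (LinearMap.continuous_of_finiteDimensional (b.coord i)).comp continuous_quot_mk }
    refine ⟨2 * n, fun i => if h : (i : ℕ) < n then g ⟨i, h⟩ else -g ⟨(i : ℕ) - n, by omega⟩,
      0, ?_⟩
    ext x
    simp only [SetLike.mem_coe, Set.mem_setOf_eq, Pi.zero_apply]
    constructor
    · intro hx i
      have hx0 : L.mkQ x = 0 := (Submodule.Quotient.mk_eq_zero L).2 hx
      split_ifs with hi <;>
        simp [g, LinearMap.comp_apply, hx0]
    · intro hx
      have hx0 : ∀ j : Fin n, b.coord j (L.mkQ x) = 0 := by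
        intro j
        have h1 := hx ⟨j, by omega⟩
        have h2 := hx ⟨n + j, by omega⟩
        rw [dif_pos (show ((⟨(j : ℕ), by omega⟩ : Fin (2 * n)) : ℕ) < n from j.isLt)] at h1
        rw [dif_neg (show ¬ ((⟨n + (j : ℕ), by omega⟩ : Fin (2 * n)) : ℕ) < n by simp)] at h2
        simp only [ContinuousLinearMap.neg_apply, neg_nonpos] at h2
        have he : (⟨n + (j : ℕ), by omega⟩ : Fin (2 * n)).val - n = (j : ℕ) := by simp
        have hg1 : (b.coord j) (L.mkQ x) ≤ 0 := by
          simpa [g, Fin.eta] using h1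
        have hg2 : 0 ≤ (b.coord j) (L.mkQ x) := by
          simp only [he] at h2
          simpa [g, Fin.eta] using h2
        linarith
      have : L.mkQ x = 0 := by
        apply b.forall_coord_eq_zero_iff.mp
        intro j; exact hx0 j
      exact (Submodule.Quotient.mk_eq_zero L).1 this
end

section
/- If a nonempty generalized polyhedral convex set Q (the intersection of a closed affine subspace M with finitely many continuous linear inequality constraints) can be written as {x ∈ X : ⟨z_i*, x⟩ ≤ γ_i, i = 1,…,p} for some z_i* ∈ X* and γ_i ∈ ℝ, then the closed affine subspace M containing Q has finite codimension. -/
open Set Pointwise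

variable {X : Type*} [AddCommGroup X] [Module ℝ X] [TopologicalSpace X]
  [IsTopologicalAddGroup X] [ContinuousSMul ℝ X] [LocallyConvexSpace ℝ X] [T2Space X]
variable {Y : Type*} [AddCommGroup Y] [Module ℝ Y] [TopologicalSpace Y]
  [IsTopologicalAddGroup Y] [ContinuousSMul ℝ Y] [LocallyConvexSpace ℝ Y] [T2Space Y]
variable {Z : Type*} [AddCommGroup Z] [Module ℝ Z] [TopologicalSpace Z]
  [IsTopologicalAddGroup Z] [ContinuousSMul ℝ Z] [LocallyConvexSpace ℝ Z] [T2Space Z]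

theorem pcs_representation_implies_finite_codim
    (m : ℕ) (xs : Fin m → X →L[ℝ] ℝ) (α : Fin m → ℝ)
    (a : X) (L : Submodule ℝ X) (hL : IsClosed (L : Set X))
    (Q : Set X)
    (hQ : Q = {x : X | x ∈ a +ᵥ (L : Set X) ∧ ∀ i, xs i x ≤ α i})
    (hne : Q.Nonempty)
    (p : ℕ) (zs : Fin p → X →L[ℝ] ℝ) (γ : Fin p → ℝ)
    (hQ' : Q = {x : X | ∀ i, zs i x ≤ γ i}) :
    FiniteDimensional ℝ (X ⧸ L) := by
  obtain ⟨x₀, hx₀⟩ := hne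
  -- the linear map to ℝ^p
  set φ : X →ₗ[ℝ] (Fin p → ℝ) := LinearMap.pi (fun i => (zs i : X →ₗ[ℝ] ℝ)) with hφ
  set N : Submodule ℝ X := LinearMap.ker φ with hN
  -- N ≤ L
  have hNL : N ≤ L := by
    intro v hv
    have hvz : ∀ i, zs i v = 0 := by
      intro i
      have := congrFun (LinearMap.mem_ker.mp hv) i
      simpa [hφ] using this
    have hx₀z : ∀ i, zs i x₀ ≤ γ i := by
      have := hx₀; rw [hQ'] at this; exact this
    have hx₀v : x₀ + v ∈ Q := by
      rw [hQ']
      intro i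
      simpa [map_add, hvz i] using hx₀z i
    have h1 : x₀ ∈ a +ᵥ (L : Set X) := by
      have := hx₀; rw [hQ] at this; exact this.1
    have h2 : x₀ + v ∈ a +ᵥ (L : Set X) := by
      have := hx₀v; rw [hQ] at this; exact this.1
    obtain ⟨l₁, hl₁, rfl⟩ := h1
    obtain ⟨l₂, hl₂, hl₂e⟩ := h2
    have h : l₂ = l₁ + v := by
      have h' : a + l₂ = a + (l₁ + v) := by
        simpa [vadd_eq_add, add_assoc] using hl₂e
      exact add_left_cancel h'
    have := sub_mem hl₂ hl₁
    rwa [h, add_comm l₁ v, add_sub_cancel_right] at this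
  -- X ⧸ N is finite dimensional
  have hfin : FiniteDimensional ℝ (X ⧸ N) := by
    have := (LinearMap.quotKerEquivRange φ)
    exact Module.Finite.equiv this.symm
  -- X ⧸ L is a quotient of X ⧸ N
  have hsurj : Function.Surjective (Submodule.mapQ N L LinearMap.id hNL) := by
    intro y
    obtain ⟨x, rfl⟩ := Submodule.mkQ_surjective L y
    exact ⟨Submodule.Quotient.mk x, rfl⟩
  exact Module.Finite.of_surjective _ hsurj
end

section
/- Let X = ℓ², Ω₀ the set of finitely supported sequences in ℓ², y = (2^{1−n})_n, z = (1/n)_n, M = span{z}, Ω = y + Ω₀. Then there exist no x* ∈ ℓ² \ {0} and α ∈ ℝ such that ⟨x*, x⟩ ≤ α ≤ ⟨x*, w⟩ for all x ∈ M and w ∈ Ω with strict inequality α < ⟨x*, ŵ⟩ for some ŵ ∈ Ω; i.e., M and Ω cannot be separated by a closed hyperplane not containing Ω. -/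
open Set

theorem no_proper_separation_line_affine
    (y z : lp (fun _ : ℕ => ℝ) 2)
    (hy : ∀ n : ℕ, y n = (1 / 2 : ℝ) ^ n)
    (hz : ∀ n : ℕ, z n = 1 / (n + 1 : ℝ)) :
    ¬ ∃ (xs : lp (fun _ : ℕ => ℝ) 2) (α : ℝ), xs ≠ 0 ∧
        (∀ μ : ℝ, inner (𝕜 := ℝ) xs (μ • z) ≤ α) ∧
        (∀ u : lp (fun _ : ℕ => ℝ) 2, {n : ℕ | u n ≠ 0}.Finite →
          α ≤ inner (𝕜 := ℝ) xs (y + u)) ∧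
        (∃ u : lp (fun _ : ℕ => ℝ) 2, {n : ℕ | u n ≠ 0}.Finite ∧
          α < inner (𝕜 := ℝ) xs (y + u)) := by
  rintro ⟨xs, α, hne, -, hge, -⟩
  apply hne
  apply lp.ext
  funext n
  show xs n = (0 : ℝ)
  by_contra ha
  -- choose t so that ⟨xs, y⟩ + t * xs n = α - 1
  set c : ℝ := inner (𝕜 := ℝ) xs y with hc
  set t : ℝ := (α - 1 - c) / xs n with ht
  set u : lp (fun _ : ℕ => ℝ) 2 := t • lp.single 2 n (1 : ℝ) with hu
  have hfin : {m : ℕ | u m ≠ 0}.Finite := by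
    apply Set.Finite.subset (Set.finite_singleton n)
    intro m hm
    simp only [Set.mem_setOf_eq] at hm
    by_contra hmn
    apply hm
    have h0 : (lp.single 2 n (1 : ℝ) : lp (fun _ : ℕ => ℝ) 2) m = 0 := lp.single_apply_ne 2 n 1 hmn
    simp [hu, h0]
    exact Or.inr (by simpa using h0)
  have h := hge u hfin
  have hinner : (inner (𝕜 := ℝ) xs (y + u) : ℝ)
      = c + t * xs n := by
    rw [hu, inner_add_right, inner_smul_right]
    rw [lp.inner_single_right]
    simp [hc, RCLike.inner_apply, mul_comm]
  rw [hinner, ht, div_mul_cancel₀ _ ha] at h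
  linarith
end

section
/- Let X be a real locally convex Hausdorff topological vector space, L and M closed linear subspaces with closure(L + M) = X but L + M ≠ X, and a ∈ X \ (L + M), Ω = a + L. Then M ∩ Ω = ∅ and there exist no x* ∈ X* \ {0} and α ∈ ℝ with sup_{x∈M} ⟨x*, x⟩ ≤ α ≤ inf_{y∈Ω} ⟨x*, y⟩; i.e., M and the closed affine set Ω cannot be separated by any closed hyperplane. -/
open Set Pointwise

variable {X : Type*} [AddCommGroup X] [Module ℝ X] [TopologicalSpace X]
  [IsTopologicalAddGroup X] [ContinuousSMul ℝ X] [LocallyConvexSpace ℝ X] [T2Space X]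
variable {Y : Type*} [AddCommGroup Y] [Module ℝ Y] [TopologicalSpace Y]
  [IsTopologicalAddGroup Y] [ContinuousSMul ℝ Y] [LocallyConvexSpace ℝ Y] [T2Space Y]
variable {Z : Type*} [AddCommGroup Z] [Module ℝ Z] [TopologicalSpace Z]
  [IsTopologicalAddGroup Z] [ContinuousSMul ℝ Z] [LocallyConvexSpace ℝ Z] [T2Space Z]


lemma vanish_of_bddAbove {X : Type*} [AddCommGroup X] [Module ℝ X] [TopologicalSpace X]
    (p : Submodule ℝ X) (f : X →L[ℝ] ℝ) (α : ℝ)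
    (h : ∀ x ∈ p, f x ≤ α) : ∀ x ∈ p, f x = 0 := by
  intro x hx
  by_contra hfx
  rcases lt_or_gt_of_ne hfx with hneg | hpos
  · have := h (((α + 1) / f x) • x) (p.smul_mem _ hx)
    rw [map_smul] at this
    have hx' : (α + 1) / f x * f x = α + 1 := div_mul_cancel₀ _ (ne_of_lt hneg)
    simp [hx'] at this; linarith
  · have := h (((α + 1) / f x) • x) (p.smul_mem _ hx)
    rw [map_smul] at this
    have hx' : (α + 1) / f x * f x = α + 1 := div_mul_cancel₀ _ (ne_of_gt hpos)
    simp [hx'] at this; linarith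

theorem no_separation_closed_subspaces
    (L M : Submodule ℝ X) (hL : IsClosed (L : Set X)) (hM : IsClosed (M : Set X))
    (hdense : closure ((L : Set X) + (M : Set X)) = Set.univ)
    (hnotall : (L : Set X) + (M : Set X) ≠ Set.univ)
    (a : X) (ha : a ∉ (L : Set X) + (M : Set X)) :
    (M : Set X) ∩ (a +ᵥ (L : Set X)) = ∅ ∧
      ¬ ∃ (f : X →L[ℝ] ℝ) (α : ℝ), f ≠ 0 ∧
        (∀ x ∈ (M : Set X), f x ≤ α) ∧ (∀ y ∈ a +ᵥ (L : Set X), α ≤ f y) := by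
  constructor
  · ext x
    simp only [Set.mem_inter_iff, Set.mem_empty_iff_false, iff_false]
    rintro ⟨hxM, l, hl, rfl⟩
    refine ha ⟨-l, L.neg_mem hl, a + l, ?_, by module⟩
    simpa [vadd_eq_add] using hxM
  · rintro ⟨f, α, hf0, hfM, hfΩ⟩
    -- f vanishes on M
    have hM0 : ∀ x ∈ M, f x = 0 := vanish_of_bddAbove M f α hfM
    -- f vanishes on L
    have hL0 : ∀ x ∈ L, f x = 0 := by
      have key : ∀ x ∈ L, (-f) x = 0 := by
        apply vanish_of_bddAbove L (-f) (f a - α)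
        intro l hl
        have := hfΩ (a + l) ⟨l, hl, by simp [vadd_eq_add]⟩
        simp only [ContinuousLinearMap.neg_apply]
        rw [map_add] at this
        linarith
      intro x hx
      have := key x hx
      simp only [ContinuousLinearMap.neg_apply, neg_eq_zero] at this
      exact this
    -- f vanishes on L + M
    have hsub : (L : Set X) + (M : Set X) ⊆ (f ⁻¹' {0} : Set X) := by
      rintro _ ⟨l, hl, m, hm, rfl⟩
      simp [map_add, hL0 l hl, hM0 m hm]
    have hclosed : IsClosed (f ⁻¹' {0} : Set X) :=
      isClosed_singleton.preimage f.continuous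
    have : (Set.univ : Set X) ⊆ (f ⁻¹' {0}) := by
      rw [← hdense]
      exact hclosed.closure_subset_iff.mpr hsub
    apply hf0
    ext x
    simpa using this (Set.mem_univ x)
end

section
/- If P is a polyhedral convex set and M is a closed affine subspace of X with parallel subspace L = M − M, then for every x̄ ∈ P ∩ M, the normal cone satisfies N(x̄; P ∩ M) = N(x̄; P) + L^⊥, where L^⊥ = {x* ∈ X* : ⟨x*, v⟩ = 0 for all v ∈ L}. -/
open Set Pointwise

variable {X : Type*} [AddCommGroup X] [Module ℝ X] [TopologicalSpace X]
  [IsTopologicalAddGroup X] [ContinuousSMul ℝ X] [LocallyConvexSpace ℝ X] [T2Space X]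
variable {Y : Type*} [AddCommGroup Y] [Module ℝ Y] [TopologicalSpace Y]
  [IsTopologicalAddGroup Y] [ContinuousSMul ℝ Y] [LocallyConvexSpace ℝ Y] [T2Space Y]
variable {Z : Type*} [AddCommGroup Z] [Module ℝ Z] [TopologicalSpace Z]
  [IsTopologicalAddGroup Z] [ContinuousSMul ℝ Z] [LocallyConvexSpace ℝ Z] [T2Space Z]

/-- Algebraic Farkas lemma (Bartl-style induction). -/
theorem farkas_aux {V : Type*} [AddCommGroup V] [Module ℝ V] :
    ∀ (n : ℕ) (h : Fin n → (V →ₗ[ℝ] ℝ)) (g : V →ₗ[ℝ] ℝ),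
      (∀ v, (∀ i, h i v ≤ 0) → g v ≤ 0) →
      ∃ lam : Fin n → ℝ, (∀ i, 0 ≤ lam i) ∧ ∀ v, g v = ∑ i, lam i * h i v := by
  intro n
  induction n with
  | zero =>
      intro h g hg
      refine ⟨fun _ => 0, fun _ => le_rfl, fun v => ?_⟩
      have h1 := hg v (fun i => i.elim0)
      have h2 := hg (-v) (fun i => i.elim0)
      simp only [map_neg, neg_nonpos] at h2
      simp only [Finset.univ_eq_empty, Finset.sum_empty]
      linarith
  | succ n ih =>
      intro h g hg
      by_cases hc : ∀ v, (∀ i : Fin n, h i.castSucc v ≤ 0) → g v ≤ 0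
      · obtain ⟨lam, hlam, hsum⟩ := ih (fun i => h i.castSucc) g hc
        refine ⟨Fin.snoc lam 0, fun i => ?_, fun v => ?_⟩
        · refine Fin.lastCases ?_ (fun j => ?_) i
          · simp
          · simp [hlam j]
        · rw [Fin.sum_univ_castSucc]
          simp [hsum v]
      · push_neg at hc
        obtain ⟨w0, hw1, hw2⟩ := hc
        have hcpos : 0 < h (Fin.last n) w0 := by
          by_contra h0
          push_neg at h0
          have : ∀ i : Fin (n + 1), h i w0 ≤ 0 := fun i => Fin.lastCases h0 hw1 i
          linarith [hg w0 this]
        set c := h (Fin.last n) w0 with hcdef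
        set w : V := c⁻¹ • w0 with hwdef
        have hlastw : h (Fin.last n) w = 1 := by
          rw [hwdef, map_smul, smul_eq_mul, ← hcdef, inv_mul_cancel₀ hcpos.ne']
        have hiw : ∀ i : Fin n, h i.castSucc w ≤ 0 := by
          intro i
          rw [hwdef, map_smul, smul_eq_mul]
          exact mul_nonpos_of_nonneg_of_nonpos (inv_nonneg.2 hcpos.le) (hw1 i)
        have hgw : 0 < g w := by
          rw [hwdef, map_smul, smul_eq_mul]
          exact mul_pos (inv_pos.2 hcpos) hw2
        set h' : Fin n → (V →ₗ[ℝ] ℝ) :=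
          fun i => h i.castSucc - (h i.castSucc w) • h (Fin.last n) with hh'
        set g' : V →ₗ[ℝ] ℝ := g - (g w) • h (Fin.last n) with hg'
        have key : ∀ v, (∀ i, h' i v ≤ 0) → g' v ≤ 0 := by
          intro v hv
          set u : V := v - (h (Fin.last n) v) • w with hu
          have hlu : h (Fin.last n) u = 0 := by
            rw [hu, map_sub, map_smul, smul_eq_mul, hlastw]; ring
          have hiu : ∀ i : Fin (n + 1), h i u ≤ 0 := by
            intro i
            refine Fin.lastCases (le_of_eq hlu) (fun j => ?_) i
            have := hv j
            rw [hh'] at this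
            simp only [LinearMap.sub_apply, LinearMap.smul_apply, smul_eq_mul] at this
            rw [hu, map_sub, map_smul, smul_eq_mul]
            linarith
          have := hg u hiu
          rw [hu, map_sub, map_smul, smul_eq_mul] at this
          rw [hg']
          simp only [LinearMap.sub_apply, LinearMap.smul_apply, smul_eq_mul]
          linarith
        obtain ⟨lam, hlam, hsum⟩ := ih h' g' key
        set μ : ℝ := g w - ∑ i, lam i * h i.castSucc w with hμ
        have hμ0 : 0 ≤ μ := by
          have : ∑ i, lam i * h i.castSucc w ≤ 0 :=
            Finset.sum_nonpos fun i _ => mul_nonpos_of_nonneg_of_nonpos (hlam i) (hiw i)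
          rw [hμ]; linarith
        refine ⟨Fin.snoc lam μ, fun i => ?_, fun v => ?_⟩
        · refine Fin.lastCases ?_ (fun j => ?_) i
          · simpa using hμ0
          · simp [hlam j]
        · rw [Fin.sum_univ_castSucc]
          simp only [Fin.snoc_castSucc, Fin.snoc_last]
          have e1 := hsum v
          rw [hg'] at e1
          simp only [LinearMap.sub_apply, LinearMap.smul_apply, smul_eq_mul, hh'] at e1
          have e2 : ∑ x : Fin n, lam x * ((h x.castSucc) v - (h x.castSucc) w * (h (Fin.last n)) v)
              = ∑ i, lam i * h i.castSucc v
                - (∑ i, lam i * h i.castSucc w) * h (Fin.last n) v := by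
            rw [Finset.sum_mul, ← Finset.sum_sub_distrib]
            exact Finset.sum_congr rfl fun i _ => by ring
          rw [e2] at e1
          rw [hμ]
          linear_combination e1

theorem normalCone_inter_pcs_affine
    (P : Set X) (hP : IsPolyhedral P)
    (a : X) (L : Submodule ℝ X) (hL : IsClosed (L : Set X))
    (xb : X) (hxb : xb ∈ P ∩ (a +ᵥ (L : Set X))) :
    normalCone (P ∩ (a +ᵥ (L : Set X))) xb =
      normalCone P xb + {f : X →L[ℝ] ℝ | ∀ v ∈ L, f v = 0} := by
  obtain ⟨hxbP, hxbM⟩ := hxb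
  obtain ⟨l0, hl0, hl0e⟩ := hxbM
  have hl0e' : xb = a + l0 := by rw [← hl0e]; rfl
  -- membership of differences in L
  have hdiff : ∀ x ∈ a +ᵥ (L : Set X), x - xb ∈ L := by
    intro x hx
    obtain ⟨l, hl, hle⟩ := hx
    have hle' : x = a + l := by rw [← hle]; rfl
    have : x - xb = l - l0 := by rw [hle', hl0e']; abel
    rw [this]; exact sub_mem hl hl0
  apply Subset.antisymm
  · -- hard direction
    intro g hg
    obtain ⟨m, f, α, hPeq⟩ := hP
    have hfxb : ∀ i, f i xb ≤ α i := by rw [hPeq] at hxbP; exact hxbP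
    -- active-constraint functionals (0 for inactive)
    set F : Fin m → (X →L[ℝ] ℝ) := fun i => if α i ≤ f i xb then f i else 0 with hF
    -- Farkas hypothesis on L
    have hyp : ∀ v : L, (∀ i : Fin m,
        ((F i).toLinearMap ∘ₗ L.subtype) v ≤ 0) →
        (g.toLinearMap ∘ₗ L.subtype) v ≤ 0 := by
      intro v hv
      simp only [LinearMap.comp_apply, Submodule.subtype_apply,
        ContinuousLinearMap.coe_coe] at hv ⊢
      -- find small positive t
      have hev : ∀ i : Fin m, ∀ᶠ t : ℝ in nhdsWithin 0 (Set.Ioi 0),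
          t * f i (v : X) ≤ α i - f i xb := by
        intro i
        by_cases hA : α i ≤ f i xb
        · have hfv : f i (v : X) ≤ 0 := by
            have := hv i; rw [hF] at this; simpa [hA] using this
          filter_upwards [self_mem_nhdsWithin] with t ht
          have ht' : (0 : ℝ) < t := ht
          have h1 : t * f i (v : X) ≤ 0 := mul_nonpos_of_nonneg_of_nonpos ht'.le hfv
          have h2 : (0 : ℝ) ≤ α i - f i xb := by linarith [hfxb i]
          linarith
        · push_neg at hA
          have hpos : (0 : ℝ) < α i - f i xb := by linarith
          have htend : Filter.Tendsto (fun t : ℝ => t * f i (v : X))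
              (nhdsWithin 0 (Set.Ioi 0)) (nhds 0) := by
            have : Filter.Tendsto (fun t : ℝ => t * f i (v : X)) (nhds 0) (nhds 0) := by
              have hc : Continuous (fun t : ℝ => t * f i (v : X)) := continuous_id.mul continuous_const; simpa using hc.tendsto (0 : ℝ)
            exact this.mono_left nhdsWithin_le_nhds
          exact (htend.eventually_lt_const hpos).mono fun t ht => ht.le
      have hex : ∃ t : ℝ, (∀ i : Fin m, t * f i (v : X) ≤ α i - f i xb) ∧ t ∈ Set.Ioi (0:ℝ) := by
        have := ((Filter.eventually_all.2 hev).and self_mem_nhdsWithin)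
        exact this.exists
      obtain ⟨t, htle, ht0⟩ := hex
      have ht0' : (0 : ℝ) < t := ht0
      -- x := xb + t • v is in P ∩ (a +ᵥ L)
      have hxP : xb + t • (v : X) ∈ P := by
        rw [hPeq]
        intro i
        have : f i (xb + t • (v : X)) = f i xb + t * f i (v : X) := by
          rw [map_add, map_smul]; rfl
        rw [this]; linarith [htle i]
      have hxM : xb + t • (v : X) ∈ a +ᵥ (L : Set X) := by
        refine ⟨l0 + t • (v : X), add_mem hl0 (L.smul_mem t v.2), ?_⟩
        show a + (l0 + t • (v : X)) = xb + t • (v : X)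
        rw [hl0e']; abel
      have := hg _ ⟨hxP, hxM⟩
      have heq : (xb + t • (v : X)) - xb = t • (v : X) := by abel
      rw [heq, map_smul] at this
      have : t * g (v : X) ≤ 0 := this
      nlinarith
    obtain ⟨lam, hlam, hsum⟩ := farkas_aux m
      (fun i => (F i).toLinearMap ∘ₗ L.subtype) (g.toLinearMap ∘ₗ L.subtype) hyp
    set u : X →L[ℝ] ℝ := ∑ i, lam i • F i with hu
    refine Set.mem_add.2 ⟨u, ?_, g - u, ?_, add_sub_cancel u g⟩
    · -- u ∈ normalCone P xb
      intro x hxP'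
      rw [hPeq] at hxP'
      have : u (x - xb) = ∑ i, lam i * F i (x - xb) := by
        rw [hu]; simp [ContinuousLinearMap.sum_apply]
      rw [this]
      refine Finset.sum_nonpos fun i _ => ?_
      refine mul_nonpos_of_nonneg_of_nonpos (hlam i) ?_
      rw [hF]
      by_cases hA : α i ≤ f i xb
      · have hact : f i xb = α i := le_antisymm (hfxb i) hA
        simp only [hA, if_true, map_sub]
        rw [hact]; linarith [hxP' i]
      · simp [hA]
    · -- g - u vanishes on L
      intro v hv
      have := hsum ⟨v, hv⟩
      simp only [LinearMap.comp_apply, Submodule.subtype_apply,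
        ContinuousLinearMap.coe_coe] at this
      have hue : u v = ∑ i, lam i * F i v := by
        rw [hu]; simp [ContinuousLinearMap.sum_apply]
      simp only [ContinuousLinearMap.sub_apply]
      rw [hue, ← this]; ring
  · -- easy direction
    rintro g hgmem
    obtain ⟨u, hu, w, hw, rfl⟩ := Set.mem_add.1 hgmem
    intro x hx
    have h1 : u (x - xb) ≤ 0 := hu x hx.1
    have h2 : w (x - xb) = 0 := hw _ (hdiff x hx.2)
    simp only [ContinuousLinearMap.add_apply]
    linarith
end

section
/- If P₁ and P₂ are polyhedral convex sets in X, then for every x̄ ∈ P₁ ∩ P₂, N(x̄; P₁ ∩ P₂) = N(x̄; P₁) + N(x̄; P₂). -/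
open Set Pointwise

variable {X : Type*} [AddCommGroup X] [Module ℝ X] [TopologicalSpace X]
  [IsTopologicalAddGroup X] [ContinuousSMul ℝ X] [LocallyConvexSpace ℝ X] [T2Space X]
variable {Y : Type*} [AddCommGroup Y] [Module ℝ Y] [TopologicalSpace Y]
  [IsTopologicalAddGroup Y] [ContinuousSMul ℝ Y] [LocallyConvexSpace ℝ Y] [T2Space Y]
variable {Z : Type*} [AddCommGroup Z] [Module ℝ Z] [TopologicalSpace Z]
  [IsTopologicalAddGroup Z] [ContinuousSMul ℝ Z] [LocallyConvexSpace ℝ Z] [T2Space Z]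

section MyAux

/-- Farkas' lemma for continuous linear functionals, via Fourier–Motzkin style induction. -/
lemma my_farkas : ∀ (m : ℕ) (f : Fin m → X →L[ℝ] ℝ) (u : X →L[ℝ] ℝ),
    (∀ d, (∀ i, f i d ≤ 0) → u d ≤ 0) →
    ∃ lam : Fin m → ℝ, (∀ i, 0 ≤ lam i) ∧ u = ∑ i, lam i • f i := by
  intro m
  induction m with
  | zero =>
    intro f u h
    have hu : u = 0 := by
      ext d
      have h1 := h d (fun i => i.elim0)
      have h2 := h (-d) (fun i => i.elim0)
      simp only [map_neg, neg_nonpos] at h2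
      simp only [ContinuousLinearMap.zero_apply]
      linarith
    exact ⟨fun _ => 0, fun _ => le_refl _, by simp [hu]⟩
  | succ m IH =>
    intro f u h
    by_cases hc : ∀ d, (∀ i : Fin m, f i.castSucc d ≤ 0) → u d ≤ 0
    · obtain ⟨lam, hlam, hu⟩ := IH (fun i => f i.castSucc) u hc
      refine ⟨Fin.snoc lam 0, ?_, ?_⟩
      · intro i
        induction i using Fin.lastCases <;> simp [hlam _]
      · rw [Fin.sum_univ_castSucc]
        simp [hu]
    · push_neg at hc
      obtain ⟨d₀, hd₀, hud₀⟩ := hc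
      have hlast : 0 < f (Fin.last m) d₀ := by
        by_contra hle
        push_neg at hle
        have hall : ∀ i : Fin (m+1), f i d₀ ≤ 0 := by
          intro i
          induction i using Fin.lastCases with
          | last => exact hle
          | cast i => exact hd₀ i
        linarith [h d₀ hall]
      set c := f (Fin.last m) d₀ with hcdef
      have hc0 : c ≠ 0 := ne_of_gt hlast
      set g : Fin m → X →L[ℝ] ℝ :=
        fun i => f i.castSucc - (f i.castSucc d₀ / c) • f (Fin.last m) with hgdef
      set u' : X →L[ℝ] ℝ := u - (u d₀ / c) • f (Fin.last m) with hu'def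
      have key : ∀ d, (∀ i, g i d ≤ 0) → u' d ≤ 0 := by
        intro d hd
        have hmem : ∀ i : Fin (m+1), f i (d - (f (Fin.last m) d / c) • d₀) ≤ 0 := by
          intro i
          induction i using Fin.lastCases with
          | last =>
            simp only [map_sub, map_smul, smul_eq_mul]
            rw [div_mul_cancel₀ _ hc0]
            simp
          | cast i =>
            have hgi := hd i
            simp only [hgdef, ContinuousLinearMap.sub_apply,
              ContinuousLinearMap.smul_apply, smul_eq_mul] at hgi
            simp only [map_sub, map_smul, smul_eq_mul]
            have : f (Fin.last m) d / c * f i.castSucc d₀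
                = f i.castSucc d₀ / c * f (Fin.last m) d := by ring
            linarith
        have hd' := h _ hmem
        simp only [map_sub, map_smul, smul_eq_mul] at hd'
        simp only [hu'def, ContinuousLinearMap.sub_apply,
          ContinuousLinearMap.smul_apply, smul_eq_mul]
        have : f (Fin.last m) d / c * u d₀ = u d₀ / c * f (Fin.last m) d := by ring
        linarith
      obtain ⟨lam, hlam, hsum⟩ := IH g u' key
      set μ : ℝ := (u d₀ - ∑ i, lam i * f i.castSucc d₀) / c with hμdef
      have hμ : 0 ≤ μ := by
        apply div_nonneg _ (le_of_lt hlast)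
        have hS : ∑ i, lam i * f i.castSucc d₀ ≤ 0 :=
          Finset.sum_nonpos fun i _ => mul_nonpos_of_nonneg_of_nonpos (hlam i) (hd₀ i)
        linarith
      refine ⟨Fin.snoc lam μ, ?_, ?_⟩
      · intro i
        induction i using Fin.lastCases <;> simp [hlam _, hμ]
      · ext x
        have hx : u' x = (∑ i, lam i • g i) x := by rw [hsum]
        simp only [hu'def, hgdef, ContinuousLinearMap.sub_apply,
          ContinuousLinearMap.smul_apply, smul_eq_mul,
          ContinuousLinearMap.sum_apply] at hx
        rw [Fin.sum_univ_castSucc]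
        simp only [ContinuousLinearMap.add_apply, ContinuousLinearMap.sum_apply,
          ContinuousLinearMap.smul_apply, smul_eq_mul, Fin.snoc_castSucc, Fin.snoc_last]
        have e2 : ∑ i, lam i * (f i.castSucc x - f i.castSucc d₀ / c * f (Fin.last m) x)
            = ∑ i, lam i * f i.castSucc x
              - (∑ i, lam i * f i.castSucc d₀) * f (Fin.last m) x / c := by
          rw [Finset.sum_mul, Finset.sum_div, ← Finset.sum_sub_distrib]
          exact Finset.sum_congr rfl fun i _ => by ring
        rw [e2] at hx
        have hμc : μ * f (Fin.last m) x
            = u d₀ / c * f (Fin.last m) x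
              - (∑ i, lam i * f i.castSucc d₀) * f (Fin.last m) x / c := by
          rw [hμdef]; field_simp
        linarith

lemma my_exists_t {m : ℕ} (δ : Fin m → ℝ) (hδ : ∀ i, 0 < δ i) :
    ∃ t : ℝ, 0 < t ∧ ∀ i, t ≤ δ i := by
  rcases isEmpty_or_nonempty (Fin m) with h | h
  · exact ⟨1, one_pos, fun i => (h.false i).elim⟩
  · refine ⟨Finset.univ.inf' Finset.univ_nonempty δ, ?_, fun i => Finset.inf'_le _ (Finset.mem_univ i)⟩
    rw [Finset.lt_inf'_iff]
    exact fun i _ => hδ i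

lemma my_normal_rep {m : ℕ} (f : Fin m → X →L[ℝ] ℝ) (α : Fin m → ℝ) (xb : X)
    (hxb : ∀ i, f i xb ≤ α i) (u : X →L[ℝ] ℝ)
    (hu : u ∈ normalCone {x : X | ∀ i, f i x ≤ α i} xb) :
    ∃ lam : Fin m → ℝ, (∀ i, 0 ≤ lam i) ∧
      u = ∑ i, lam i • (if f i xb = α i then f i else 0) := by
  apply my_farkas
  intro d hd
  classical
  set δ : Fin m → ℝ := fun i => if 0 < f i d then (α i - f i xb) / f i d else 1 with hδdef
  have hδpos : ∀ i, 0 < δ i := by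
    intro i
    simp only [hδdef]
    split_ifs with hfd
    · apply div_pos _ hfd
      have hne : f i xb ≠ α i := by
        intro heq
        have := hd i
        rw [if_pos heq] at this
        linarith
      have := hxb i
      cases lt_or_eq_of_le this with
      | inl hlt => linarith
      | inr heq => exact absurd heq hne
    · exact one_pos
  obtain ⟨t, ht, htle⟩ := my_exists_t δ hδpos
  have hmem : xb + t • d ∈ {x : X | ∀ i, f i x ≤ α i} := by
    intro i
    simp only [map_add, map_smul, smul_eq_mul]
    have hti := htle i
    simp only [hδdef] at hti
    split_ifs at hti with hfd
    · have := (le_div_iff₀ hfd).mp hti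
      linarith
    · push_neg at hfd
      have h1 : t * f i d ≤ 0 := mul_nonpos_of_nonneg_of_nonpos (le_of_lt ht) hfd
      have := hxb i
      linarith
  have := hu _ hmem
  rw [add_sub_cancel_left, map_smul, smul_eq_mul] at this
  by_contra hpos
  push_neg at hpos
  nlinarith

lemma my_sum_mem_normal {m : ℕ} (f : Fin m → X →L[ℝ] ℝ) (α : Fin m → ℝ) (xb : X)
    (lam : Fin m → ℝ) (hlam : ∀ i, 0 ≤ lam i) :
    (∑ i, lam i • (if f i xb = α i then f i else 0))
      ∈ normalCone {x : X | ∀ i, f i x ≤ α i} xb := by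
  intro x hx
  rw [ContinuousLinearMap.sum_apply]
  apply Finset.sum_nonpos
  intro i _
  rw [ContinuousLinearMap.smul_apply, smul_eq_mul]
  apply mul_nonpos_of_nonneg_of_nonpos (hlam i)
  split_ifs with hact
  · rw [map_sub]
    have := hx i
    linarith [hact ▸ this]
  · simp


end MyAux

theorem normalCone_inter_pcs_pcs
    (P₁ P₂ : Set X) (hP₁ : IsPolyhedral P₁) (hP₂ : IsPolyhedral P₂)
    (xb : X) (hxb : xb ∈ P₁ ∩ P₂) :
    normalCone (P₁ ∩ P₂) xb = normalCone P₁ xb + normalCone P₂ xb := by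
  unfold IsPolyhedral at hP₁ hP₂
  classical
  obtain ⟨m, f, α, rfl⟩ := hP₁
  obtain ⟨n, g, β, rfl⟩ := hP₂
  obtain ⟨hxb₁, hxb₂⟩ := hxb
  apply Set.Subset.antisymm
  · intro u hu
    set F : Fin (m + n) → X →L[ℝ] ℝ := Fin.append f g with hF
    set A : Fin (m + n) → ℝ := Fin.append α β with hA
    have hsplit : ∀ x : X, (∀ i, F i x ≤ A i) ↔
        ((∀ i, f i x ≤ α i) ∧ (∀ j, g j x ≤ β j)) := by
      intro x
      constructor
      · intro h
        constructor
        · intro i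
          have := h (Fin.castAdd n i)
          simpa [hF, hA, Fin.append_left] using this
        · intro j
          have := h (Fin.natAdd m j)
          simpa [hF, hA, Fin.append_right] using this
      · intro ⟨h1, h2⟩ i
        refine Fin.addCases ?_ ?_ i
        · intro i; simpa [hF, hA, Fin.append_left] using h1 i
        · intro j; simpa [hF, hA, Fin.append_right] using h2 j
    have hEq : {x : X | ∀ i, f i x ≤ α i} ∩ {x : X | ∀ j, g j x ≤ β j}
        = {x : X | ∀ i, F i x ≤ A i} := by
      ext x
      simp only [Set.mem_inter_iff, Set.mem_setOf_eq, hsplit]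
    have hxbF : ∀ i, F i xb ≤ A i := (hsplit xb).mpr ⟨hxb₁, hxb₂⟩
    rw [hEq] at hu
    obtain ⟨lam, hlam, hurep⟩ := my_normal_rep F A xb hxbF u hu
    rw [Fin.sum_univ_add] at hurep
    rw [Set.mem_add]
    refine ⟨∑ i : Fin m, lam (Fin.castAdd n i) •
        (if f i xb = α i then f i else 0), ?_,
      ∑ j : Fin n, lam (Fin.natAdd m j) •
        (if g j xb = β j then g j else 0), ?_, ?_⟩
    · exact my_sum_mem_normal f α xb _ (fun i => hlam _)
    · exact my_sum_mem_normal g β xb _ (fun j => hlam _)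
    · rw [hurep]
      congr 1
      · exact Finset.sum_congr rfl fun i _ => by
          simp [hF, hA, Fin.append_left]
      · exact Finset.sum_congr rfl fun j _ => by
          simp [hF, hA, Fin.append_right]
  · rintro u hu
    rw [Set.mem_add] at hu
    obtain ⟨u₁, h₁, u₂, h₂, rfl⟩ := hu
    intro x hx
    rw [ContinuousLinearMap.add_apply]
    have := h₁ x hx.1
    have := h₂ x hx.2
    linarith
end

section
/- If P is a polyhedral convex set and Q is a generalized polyhedral convex set in X, then for every x̄ ∈ P ∩ Q, N(x̄; P ∩ Q) = N(x̄; P) + N(x̄; Q). -/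
open Set Pointwise

variable {X : Type*} [AddCommGroup X] [Module ℝ X] [TopologicalSpace X]
  [IsTopologicalAddGroup X] [ContinuousSMul ℝ X] [LocallyConvexSpace ℝ X] [T2Space X]
variable {Y : Type*} [AddCommGroup Y] [Module ℝ Y] [TopologicalSpace Y]
  [IsTopologicalAddGroup Y] [ContinuousSMul ℝ Y] [LocallyConvexSpace ℝ Y] [T2Space Y]
variable {Z : Type*} [AddCommGroup Z] [Module ℝ Z] [TopologicalSpace Z]
  [IsTopologicalAddGroup Z] [ContinuousSMul ℝ Z] [LocallyConvexSpace ℝ Z] [T2Space Z]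


theorem farkas_fin {V : Type*} [AddCommGroup V] [Module ℝ V] :
    ∀ (m : ℕ) (h : Fin m → (V →ₗ[ℝ] ℝ)) (g : V →ₗ[ℝ] ℝ),
    (∀ x, (∀ i, h i x ≤ 0) → g x ≤ 0) →
    ∃ l : Fin m → ℝ, (∀ i, 0 ≤ l i) ∧ g = ∑ i, l i • h i := by
  intro m
  induction m with
  | zero =>
    intro h g H
    refine ⟨0, fun i => le_rfl, ?_⟩
    ext x
    have h1 := H x (fun i => i.elim0)
    have h2 := H (-x) (fun i => i.elim0)
    simp only [map_neg, neg_nonpos] at h2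
    simp only [Finset.univ_eq_empty, Finset.sum_empty, LinearMap.zero_apply]
    linarith
  | succ m ih =>
    intro h g H
    by_cases H' : ∀ x, (∀ i : Fin m, h i.castSucc x ≤ 0) → g x ≤ 0
    · obtain ⟨l, hl, hg⟩ := ih _ g H'
      refine ⟨Fin.snoc l 0, ?_, ?_⟩
      · intro i
        refine Fin.lastCases ?_ (fun j => ?_) i
        · simp
        · simpa using hl j
      · rw [Fin.sum_univ_castSucc]
        simpa [Fin.snoc_castSucc] using hg
    · push_neg at H'
      obtain ⟨x0, hx0, gx0⟩ := H'
      set c := h (Fin.last m) x0 with hc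
      have hcpos : 0 < c := by
        by_contra hcon
        push_neg at hcon
        have hall : ∀ j : Fin (m + 1), h j x0 ≤ 0 := by
          intro j
          refine Fin.lastCases ?_ (fun i => ?_) j
          · exact hcon
          · exact hx0 i
        linarith [H x0 hall]
      have hcne : c ≠ 0 := hcpos.ne'
      set h' : Fin m → (V →ₗ[ℝ] ℝ) :=
        fun i => h i.castSucc - (h i.castSucc x0 / c) • h (Fin.last m) with hh'
      set g' : V →ₗ[ℝ] ℝ := g - (g x0 / c) • h (Fin.last m) with hg'
      have key : ∀ x, (∀ i : Fin m, h' i x ≤ 0) → g' x ≤ 0 := by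
        intro x hx
        set y := x - (h (Fin.last m) x / c) • x0 with hy
        have hyc : ∀ j : Fin (m + 1), h j y ≤ 0 := by
          intro j
          refine Fin.lastCases ?_ (fun i => ?_) j
          · simp only [hy, map_sub, map_smul, smul_eq_mul, ← hc]
            rw [div_mul_cancel₀ _ hcne]
            simp
          · have := hx i
            simp only [hh', LinearMap.sub_apply, LinearMap.smul_apply, smul_eq_mul] at this
            simp only [hy, map_sub, map_smul, smul_eq_mul]
            rw [show h (Fin.last m) x / c * h i.castSucc x0
                = h i.castSucc x0 / c * h (Fin.last m) x from by ring]
            exact this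
        have hgy := H y hyc
        have : g y = g' x := by
          simp only [hy, hg', map_sub, map_smul, smul_eq_mul, LinearMap.sub_apply,
            LinearMap.smul_apply]
          ring
        linarith [hgy, this ▸ hgy]
      obtain ⟨l, hl, hgl⟩ := ih h' g' key
      set μ : ℝ := g x0 / c - ∑ i, l i * (h i.castSucc x0 / c) with hμ
      have hμnn : 0 ≤ μ := by
        have h1 : 0 < g x0 / c := div_pos gx0 hcpos
        have h2 : ∑ i, l i * (h i.castSucc x0 / c) ≤ 0 := by
          apply Finset.sum_nonpos
          intro i _
          exact mul_nonpos_of_nonneg_of_nonpos (hl i) (div_nonpos_of_nonpos_of_nonneg (hx0 i) hcpos.le)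
        simp only [hμ]
        linarith
      refine ⟨Fin.snoc l μ, ?_, ?_⟩
      · intro i
        refine Fin.lastCases ?_ (fun j => ?_) i
        · simpa using hμnn
        · simpa using hl j
      · ext x
        have e1 : g' x = ∑ i, l i * (h i.castSucc x - h i.castSucc x0 / c * h (Fin.last m) x) := by
          rw [hgl]
          simp [hh', LinearMap.sum_apply, smul_eq_mul]
        have e2 : g' x = g x - g x0 / c * h (Fin.last m) x := by
          simp [hg', smul_eq_mul]
        rw [LinearMap.sum_apply, Fin.sum_univ_castSucc]
        simp only [Fin.snoc_castSucc, Fin.snoc_last, LinearMap.smul_apply, smul_eq_mul]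
        have e3 : ∑ i, l i * (h i.castSucc x - h i.castSucc x0 / c * h (Fin.last m) x)
            = ∑ i, l i * h i.castSucc x - (∑ i, l i * (h i.castSucc x0 / c)) * h (Fin.last m) x := by
          rw [Finset.sum_mul, ← Finset.sum_sub_distrib]
          congr 1
          ext i
          ring
        rw [e3] at e1
        rw [e2] at e1
        simp only [hμ]
        linarith [e1]

theorem farkas {V : Type*} [AddCommGroup V] [Module ℝ V] {ι : Type*} [Fintype ι]
    (h : ι → (V →ₗ[ℝ] ℝ)) (g : V →ₗ[ℝ] ℝ)
    (H : ∀ x, (∀ i, h i x ≤ 0) → g x ≤ 0) :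
    ∃ l : ι → ℝ, (∀ i, 0 ≤ l i) ∧ g = ∑ i, l i • h i := by
  obtain ⟨e⟩ : Nonempty (ι ≃ Fin (Fintype.card ι)) := ⟨Fintype.equivFin ι⟩
  obtain ⟨l, hl, hg⟩ := farkas_fin _ (h ∘ e.symm) g
    (fun x hx => H x (fun i => by simpa using hx (e i)))
  refine ⟨l ∘ e, fun i => hl _, ?_⟩
  rw [hg, ← Equiv.sum_comp e.symm (fun i => (l ∘ e) i • h i)]
  simp


theorem normalCone_inter_pcs_gpcs
    (P Q : Set X) (hP : IsPolyhedral P) (hQ : IsGPolyhedral Q)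
    (xb : X) (hxb : xb ∈ P ∩ Q) :
    normalCone (P ∩ Q) xb = normalCone P xb + normalCone Q xb := by
  obtain ⟨m, f, α, hP⟩ := hP
  obtain ⟨P₂, a, L, ⟨n, f₂, α₂, hP₂⟩, -, hQ⟩ := hQ
  have hxbP : ∀ i, f i xb ≤ α i := by
    have := hxb.1; rw [hP] at this; exact this
  have hxbQ := hxb.2
  rw [hQ] at hxbQ
  have hxbP₂ : ∀ j, f₂ j xb ≤ α₂ j := by
    have := hxbQ.1; rw [hP₂] at this; exact this
  have hxbA : xb ∈ a +ᵥ (L : Set X) := hxbQ.2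
  have memA : ∀ x : X, x ∈ a +ᵥ (L : Set X) ↔ x - xb ∈ L := by
    intro x
    obtain ⟨l0, hl0, hxbeq⟩ := hxbA
    constructor
    · rintro ⟨l1, hl1, rfl⟩
      have : (a +ᵥ l1) - xb = l1 - l0 := by
        simp only [vadd_eq_add] at hxbeq ⊢
        rw [← hxbeq]; abel
      rw [this]
      exact L.sub_mem hl1 hl0
    · intro hx
      refine ⟨l0 + (x - xb), L.add_mem hl0 hx, ?_⟩
      simp only [vadd_eq_add] at hxbeq ⊢
      rw [← add_assoc, hxbeq]; abel
  apply Set.Subset.antisymm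
  · -- hard direction
    intro g hg
    set fl : (X →L[ℝ] ℝ) → (↥L × ℝ →ₗ[ℝ] ℝ) := fun c =>
      ((c : X →ₗ[ℝ] ℝ).comp L.subtype).comp (LinearMap.fst ℝ ↥L ℝ) with hfl
    set sn : ↥L × ℝ →ₗ[ℝ] ℝ := LinearMap.snd ℝ ↥L ℝ with hsn
    set F : (Fin m ⊕ Fin n) ⊕ Unit → (↥L × ℝ →ₗ[ℝ] ℝ) :=
      Sum.elim (Sum.elim
        (fun i => fl (f i) - (α i - f i xb) • sn)
        (fun j => fl (f₂ j) - (α₂ j - f₂ j xb) • sn))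
        (fun _ => -sn) with hF
    have hzmem : ∀ w : X, w ∈ L → (∀ i, f i (xb + w) ≤ α i) → (∀ j, f₂ j (xb + w) ≤ α₂ j) →
        xb + w ∈ P ∩ Q := by
      intro w hwL h1 h2
      refine ⟨by rw [hP]; exact h1, ?_⟩
      rw [hQ]
      refine ⟨by rw [hP₂]; exact h2, (memA _).mpr ?_⟩
      rw [add_sub_cancel_left]
      exact hwL
    have hfar : ∀ p : ↥L × ℝ, (∀ k, F k p ≤ 0) → (fl g) p ≤ 0 := by
      intro p hp
      have ht : 0 ≤ p.2 := by
        have := hp (Sum.inr ())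
        simp only [hF, Sum.elim_inr, LinearMap.neg_apply, hsn, LinearMap.snd_apply,
          neg_nonpos] at this
        exact this
      have hi : ∀ i, f i (p.1 : X) ≤ (α i - f i xb) * p.2 := by
        intro i
        have := hp (Sum.inl (Sum.inl i))
        simp only [hF, Sum.elim_inl, LinearMap.sub_apply, LinearMap.smul_apply, hfl, hsn,
          LinearMap.coe_comp, Function.comp_apply, LinearMap.fst_apply, LinearMap.snd_apply,
          Submodule.coe_subtype, ContinuousLinearMap.coe_coe, smul_eq_mul, sub_nonpos] at this
        exact this
      have hj : ∀ j, f₂ j (p.1 : X) ≤ (α₂ j - f₂ j xb) * p.2 := by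
        intro j
        have := hp (Sum.inl (Sum.inr j))
        simp only [hF, Sum.elim_inl, Sum.elim_inr, LinearMap.sub_apply, LinearMap.smul_apply,
          hfl, hsn, LinearMap.coe_comp, Function.comp_apply, LinearMap.fst_apply,
          LinearMap.snd_apply, Submodule.coe_subtype, ContinuousLinearMap.coe_coe, smul_eq_mul,
          sub_nonpos] at this
        exact this
      have goal_eq : (fl g) p = g (p.1 : X) := by simp [hfl]
      rw [goal_eq]
      rcases eq_or_lt_of_le ht with t0 | tpos
      · -- t = 0
        have hz := hzmem (p.1 : X) p.1.2
          (fun i => by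
            have := hi i; rw [← t0, mul_zero] at this
            rw [map_add]
            linarith [hxbP i])
          (fun j => by
            have := hj j; rw [← t0, mul_zero] at this
            rw [map_add]
            linarith [hxbP₂ j])
        have := hg _ hz
        rw [add_sub_cancel_left] at this
        exact this
      · -- t > 0
        have hinv : 0 < p.2⁻¹ := inv_pos.mpr tpos
        have hz := hzmem (p.2⁻¹ • (p.1 : X)) (L.smul_mem _ p.1.2)
          (fun i => by
            have h1 := hi i
            rw [map_add, map_smul, smul_eq_mul]
            have h2 : p.2⁻¹ * f i (p.1 : X) ≤ p.2⁻¹ * ((α i - f i xb) * p.2) :=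
              mul_le_mul_of_nonneg_left h1 hinv.le
            rw [mul_comm (α i - f i xb) p.2, ← mul_assoc, inv_mul_cancel₀ tpos.ne',
              one_mul] at h2
            linarith)
          (fun j => by
            have h1 := hj j
            rw [map_add, map_smul, smul_eq_mul]
            have h2 : p.2⁻¹ * f₂ j (p.1 : X) ≤ p.2⁻¹ * ((α₂ j - f₂ j xb) * p.2) :=
              mul_le_mul_of_nonneg_left h1 hinv.le
            rw [mul_comm (α₂ j - f₂ j xb) p.2, ← mul_assoc, inv_mul_cancel₀ tpos.ne',
              one_mul] at h2
            linarith)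
        have h3 := hg _ hz
        rw [add_sub_cancel_left, map_smul, smul_eq_mul] at h3
        nlinarith [h3, hinv]
    obtain ⟨l, hl, hGF⟩ := farkas F (fl g) hfar
    have sumsplit : ∀ p : ↥L × ℝ, (fl g) p =
        (∑ i : Fin m, l (Sum.inl (Sum.inl i)) * (f i (p.1 : X) - (α i - f i xb) * p.2))
        + (∑ j : Fin n, l (Sum.inl (Sum.inr j)) * (f₂ j (p.1 : X) - (α₂ j - f₂ j xb) * p.2))
        - l (Sum.inr ()) * p.2 := by
      intro p
      have := LinearMap.congr_fun hGF p
      rw [LinearMap.sum_apply, Fintype.sum_sum_type, Fintype.sum_sum_type] at this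
      simp only [hF, Sum.elim_inl, Sum.elim_inr, LinearMap.smul_apply, LinearMap.sub_apply,
        LinearMap.neg_apply, hfl, hsn, LinearMap.coe_comp, Function.comp_apply,
        LinearMap.fst_apply, LinearMap.snd_apply, Submodule.coe_subtype,
        ContinuousLinearMap.coe_coe, smul_eq_mul, Fintype.sum_unique, mul_neg] at this ⊢
      rw [this]
      ring
    have ev1 : ∀ y : ↥L, g (y : X) =
        (∑ i : Fin m, l (Sum.inl (Sum.inl i)) * f i (y : X))
        + (∑ j : Fin n, l (Sum.inl (Sum.inr j)) * f₂ j (y : X)) := by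
      intro y
      have := sumsplit (y, 0)
      simp only [hfl, LinearMap.coe_comp, Function.comp_apply, LinearMap.fst_apply,
        Submodule.coe_subtype, ContinuousLinearMap.coe_coe, mul_zero, sub_zero] at this
      linarith [this]
    have ev2 : (∑ i : Fin m, l (Sum.inl (Sum.inl i)) * (α i - f i xb))
        + (∑ j : Fin n, l (Sum.inl (Sum.inr j)) * (α₂ j - f₂ j xb))
        + l (Sum.inr ()) = 0 := by
      have := sumsplit (0, 1)
      simp only [hfl, LinearMap.coe_comp, Function.comp_apply, LinearMap.fst_apply,
        Submodule.coe_subtype, ContinuousLinearMap.coe_coe, ZeroMemClass.coe_zero,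
        map_zero, mul_one, zero_sub, mul_neg, Finset.sum_neg_distrib] at this
      linarith [this]
    have nnA : 0 ≤ ∑ i : Fin m, l (Sum.inl (Sum.inl i)) * (α i - f i xb) :=
      Finset.sum_nonneg fun i _ => mul_nonneg (hl _) (sub_nonneg.mpr (hxbP i))
    have nnB : 0 ≤ ∑ j : Fin n, l (Sum.inl (Sum.inr j)) * (α₂ j - f₂ j xb) :=
      Finset.sum_nonneg fun j _ => mul_nonneg (hl _) (sub_nonneg.mpr (hxbP₂ j))
    have nnU : 0 ≤ l (Sum.inr ()) := hl _
    have sA : ∑ i : Fin m, l (Sum.inl (Sum.inl i)) * (α i - f i xb) = 0 := by linarith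
    have sB : ∑ j : Fin n, l (Sum.inl (Sum.inr j)) * (α₂ j - f₂ j xb) = 0 := by linarith
    set u : X →L[ℝ] ℝ := ∑ i : Fin m, l (Sum.inl (Sum.inl i)) • f i with hu_def
    have hu_app : ∀ w : X, u w = ∑ i : Fin m, l (Sum.inl (Sum.inl i)) * f i w := by
      intro w
      simp [hu_def, ContinuousLinearMap.sum_apply]
    have hu : u ∈ normalCone P xb := by
      intro x hx
      rw [hP] at hx
      rw [hu_app]
      have hle : ∑ i : Fin m, l (Sum.inl (Sum.inl i)) * f i (x - xb)
          ≤ ∑ i : Fin m, l (Sum.inl (Sum.inl i)) * (α i - f i xb) := by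
        apply Finset.sum_le_sum
        intro i _
        apply mul_le_mul_of_nonneg_left _ (hl _)
        rw [map_sub]
        have := hx i
        linarith
      linarith [hle, sA.le]
    have hv : g - u ∈ normalCone Q xb := by
      intro x hx
      rw [hQ] at hx
      have hx2 : x - xb ∈ L := (memA x).mp hx.2
      have hx1 : ∀ j, f₂ j x ≤ α₂ j := by
        have := hx.1; rw [hP₂] at this; exact this
      have e := ev1 ⟨x - xb, hx2⟩
      simp only [ContinuousLinearMap.coe_sub', Pi.sub_apply]
      rw [hu_app]
      have hle : ∑ j : Fin n, l (Sum.inl (Sum.inr j)) * f₂ j (x - xb)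
          ≤ ∑ j : Fin n, l (Sum.inl (Sum.inr j)) * (α₂ j - f₂ j xb) := by
        apply Finset.sum_le_sum
        intro j _
        apply mul_le_mul_of_nonneg_left _ (hl _)
        rw [map_sub]
        have := hx1 j
        linarith
      have e' : g (x - xb) = (∑ i : Fin m, l (Sum.inl (Sum.inl i)) * f i (x - xb))
          + (∑ j : Fin n, l (Sum.inl (Sum.inr j)) * f₂ j (x - xb)) := e
      linarith [hle, sB.le]
    exact Set.mem_add.mpr ⟨u, hu, g - u, hv, by abel⟩
  · -- easy direction
    rintro g hgm
    rw [Set.mem_add] at hgm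
    obtain ⟨u, hu, v, hv, rfl⟩ := hgm
    intro x hx
    have h1 := hu x hx.1
    have h2 := hv x hx.2
    simpa using add_nonpos h1 h2
end

section
/- Let F₁ : X ⇉ Y be a polyhedral convex set-valued mapping and F₂ : X ⇉ Y a generalized polyhedral convex set-valued mapping. Then for every (x̄, ȳ) ∈ gph(F₁+F₂), every decomposition ȳ = ȳ₁ + ȳ₂ with ȳᵢ ∈ Fᵢ(x̄), and every v* ∈ Y*, one has D*(F₁+F₂)(x̄, ȳ)(v*) = D*F₁(x̄, ȳ₁)(v*) + D*F₂(x̄, ȳ₂)(v*). -/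
open Set Pointwise

set_option linter.unusedSectionVars false
set_option linter.unreachableTactic false
set_option linter.unusedTactic false

section Farkas
variable {V : Type*} [AddCommGroup V] [Module ℝ V]

theorem my_farkas_fin : ∀ (m : ℕ) (f : Fin m → V →ₗ[ℝ] ℝ) (g : V →ₗ[ℝ] ℝ),
    (∀ w, (∀ i, f i w ≤ 0) → g w ≤ 0) →
    ∃ lam : Fin m → ℝ, (∀ i, 0 ≤ lam i) ∧ ∀ w, g w = ∑ i, lam i * f i w := by
  intro m
  induction m with
  | zero =>
    intro f g h
    refine ⟨fun _ => 0, fun i => le_rfl, fun w => ?_⟩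
    have h1 : g w ≤ 0 := h w (fun i => i.elim0)
    have h2 : g (-w) ≤ 0 := h (-w) (fun i => i.elim0)
    rw [map_neg] at h2
    simp only [Finset.univ_eq_empty, Finset.sum_empty]
    linarith
  | succ m ih =>
    intro f g h
    by_cases hA : ∀ w, (∀ i : Fin m, f i.succ w ≤ 0) → g w ≤ 0
    · obtain ⟨mu, hmu, hg⟩ := ih (fun i => f i.succ) g hA
      refine ⟨Fin.cons 0 mu, fun i => ?_, fun w => ?_⟩
      · refine Fin.cases ?_ ?_ i
        · simp
        · intro j; simpa using hmu j
      · rw [Fin.sum_univ_succ]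
        simpa using hg w
    · push_neg at hA
      obtain ⟨w0, hw0, hgw0⟩ := hA
      have hf0w0 : 0 < f 0 w0 := by
        by_contra hc
        rw [not_lt] at hc
        have : ∀ i : Fin (m+1), f i w0 ≤ 0 := by
          intro i
          refine Fin.cases ?_ ?_ i
          · exact hc
          · exact hw0
        linarith [h w0 this]
      set c0 : ℝ := (f 0 w0)⁻¹ with hc0
      have hc0pos : 0 < c0 := inv_pos.mpr hf0w0
      set w' : V := c0 • w0 with hw'
      have hf0w' : f 0 w' = 1 := by
        rw [hw', map_smul, smul_eq_mul, hc0, inv_mul_cancel₀ hf0w0.ne']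
      have hfw' : ∀ i : Fin m, f i.succ w' ≤ 0 := by
        intro i
        rw [hw', map_smul, smul_eq_mul]
        exact mul_nonpos_of_nonneg_of_nonpos hc0pos.le (hw0 i)
      have hgw' : 0 < g w' := by
        rw [hw', map_smul, smul_eq_mul]
        exact mul_pos hc0pos hgw0
      set F : Fin m → V →ₗ[ℝ] ℝ := fun i => f i.succ - (f i.succ w') • f 0 with hF
      set G : V →ₗ[ℝ] ℝ := g - (g w') • f 0 with hG
      have hFw' : ∀ i, F i w' = 0 := by
        intro i
        simp [hF, hf0w']
      have hGw' : G w' = 0 := by simp [hG, hf0w']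
      have hyp : ∀ w, (∀ i, F i w ≤ 0) → G w ≤ 0 := by
        intro w hw
        set w2 : V := w - (f 0 w) • w' with hw2
        have hf0w2 : f 0 w2 = 0 := by
          simp [hw2, map_sub, map_smul, hf0w', smul_eq_mul]
        have hFw2 : ∀ i, F i w2 = F i w := by
          intro i
          simp [hw2, map_sub, map_smul, hFw' i, smul_eq_mul]
        have hGw2 : G w2 = G w := by
          simp [hw2, map_sub, map_smul, hGw', smul_eq_mul]
        have hfw2 : ∀ i : Fin (m+1), f i w2 ≤ 0 := by
          intro i
          refine Fin.cases ?_ ?_ i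
          · exact le_of_eq hf0w2
          · intro j
            have e1 : f j.succ w2 = F j w2 + f j.succ w' * f 0 w2 := by
              simp [hF]; try ring
            rw [e1, hf0w2, hFw2]
            simpa using hw j
        have hgw2 : g w2 ≤ 0 := h w2 hfw2
        have e2 : G w2 = g w2 - g w' * f 0 w2 := by simp [hG]
        rw [← hGw2, e2, hf0w2]
        linarith
      obtain ⟨mu, hmu, hgF⟩ := ih F G hyp
      set c : ℝ := g w' - ∑ i, mu i * f i.succ w' with hc
      have hcpos : 0 < c := by
        have : ∑ i, mu i * f i.succ w' ≤ 0 := by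
          apply Finset.sum_nonpos
          intro i _
          exact mul_nonpos_of_nonneg_of_nonpos (hmu i) (hfw' i)
        rw [hc]; linarith
      refine ⟨Fin.cons c mu, fun i => ?_, fun w => ?_⟩
      · refine Fin.cases ?_ ?_ i
        · simpa using hcpos.le
        · intro j; simpa using hmu j
      · have e3 : g w = G w + g w' * f 0 w := by simp [hG]; try ring
        have e4 : ∀ i, F i w = f i.succ w - f i.succ w' * f 0 w := by
          intro i; simp [hF]; try ring
        rw [Fin.sum_univ_succ]
        simp only [Fin.cons_zero, Fin.cons_succ]
        rw [e3, hgF w]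
        have e5 : ∑ i, mu i * F i w
            = ∑ i, mu i * f i.succ w - (∑ i, mu i * f i.succ w') * f 0 w := by
          rw [Finset.sum_mul, ← Finset.sum_sub_distrib]
          apply Finset.sum_congr rfl
          intro i _
          rw [e4 i]; ring
        rw [e5, hc]; ring

theorem my_farkas_s12 {ι : Type*} [Fintype ι] (f : ι → V →ₗ[ℝ] ℝ) (g : V →ₗ[ℝ] ℝ)
    (h : ∀ w, (∀ i, f i w ≤ 0) → g w ≤ 0) :
    ∃ lam : ι → ℝ, (∀ i, 0 ≤ lam i) ∧ ∀ w, g w = ∑ i, lam i * f i w := by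
  set e := Fintype.equivFin ι
  obtain ⟨lam, hlam, hg⟩ := my_farkas_fin (Fintype.card ι) (fun k => f (e.symm k)) g
    (fun w hw => h w (fun i => by simpa using hw (e i)))
  refine ⟨fun i => lam (e i), fun i => hlam _, fun w => ?_⟩
  rw [hg w]
  exact Fintype.sum_equiv e.symm _ _ (fun k => by simp)

end Farkas

theorem my_small_t {ι : Type*} [Fintype ι] (p : ι → ℝ → Prop)
    (h : ∀ i, ∃ t, 0 < t ∧ ∀ s, 0 < s → s ≤ t → p i s) :
    ∃ t, 0 < t ∧ ∀ i, p i t := by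
  choose t ht hp using h
  by_cases hne : Nonempty ι
  · haveI := hne
    refine ⟨Finset.univ.inf' Finset.univ_nonempty t, ?_, ?_⟩
    · rw [Finset.lt_inf'_iff]
      exact fun i _ => ht i
    · intro i
      refine hp i _ ?_ (Finset.inf'_le t (Finset.mem_univ i))
      rw [Finset.lt_inf'_iff]
      exact fun j _ => ht j
  · exact ⟨1, one_pos, fun i => absurd ⟨i⟩ hne⟩

theorem my_small_step (c r : ℝ) (hr : 0 ≤ r) (hact : r = 0 → c ≤ 0) :
    ∃ t, 0 < t ∧ ∀ s, 0 < s → s ≤ t → s * c ≤ r := by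
  rcases le_or_gt c 0 with h | h
  · exact ⟨1, one_pos, fun s hs _ => le_trans (mul_nonpos_of_nonneg_of_nonpos hs.le h) hr⟩
  · have hrpos : 0 < r := by
      rcases eq_or_lt_of_le hr with h0 | h0
      · exact absurd (hact h0.symm) (not_le.mpr h)
      · exact h0
    refine ⟨r / c, div_pos hrpos h, fun s hs hsc => ?_⟩
    calc s * c ≤ (r / c) * c := by nlinarith
      _ = r := div_mul_cancel₀ r h.ne'

variable {X : Type*} [AddCommGroup X] [Module ℝ X] [TopologicalSpace X]
  [IsTopologicalAddGroup X] [ContinuousSMul ℝ X] [LocallyConvexSpace ℝ X] [T2Space X]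
variable {Y : Type*} [AddCommGroup Y] [Module ℝ Y] [TopologicalSpace Y]
  [IsTopologicalAddGroup Y] [ContinuousSMul ℝ Y] [LocallyConvexSpace ℝ Y] [T2Space Y]
variable {Z : Type*} [AddCommGroup Z] [Module ℝ Z] [TopologicalSpace Z]
  [IsTopologicalAddGroup Z] [ContinuousSMul ℝ Z] [LocallyConvexSpace ℝ Z] [T2Space Z]

set_option maxHeartbeats 2000000 in
theorem coderivative_sum_rule
    (F₁ F₂ : X → Set Y)
    (hF₁ : IsPolyhedral (gph F₁)) (hF₂ : IsGPolyhedral (gph F₂))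
    (xb : X) (yb yb₁ yb₂ : Y)
    (h₁ : yb₁ ∈ F₁ xb) (h₂ : yb₂ ∈ F₂ xb) (hsum : yb = yb₁ + yb₂)
    (v : Y →L[ℝ] ℝ) :
    coderiv (fun x => F₁ x + F₂ x) xb yb v =
      coderiv F₁ xb yb₁ v + coderiv F₂ xb yb₂ v := by
  classical
  subst hsum
  obtain ⟨m, p, α, hp⟩ := hF₁
  obtain ⟨P, a, L, ⟨k, q, β, hq⟩, hLclosed, hPQ⟩ := hF₂
  subst hq
  have h1g : ∀ i, p i (xb, yb₁) ≤ α i := by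
    have : (xb, yb₁) ∈ gph F₁ := h₁
    rw [hp] at this; exact this
  have h2mem : ((xb, yb₂) : X × Y) ∈ gph F₂ := h₂
  rw [hPQ] at h2mem
  obtain ⟨h2q, h2L⟩ := h2mem
  have h2q : ∀ j, q j (xb, yb₂) ≤ β j := h2q
  obtain ⟨l0, hl0, hal0⟩ := Set.mem_vadd_set.mp h2L
  rw [vadd_eq_add] at hal0
  have hdiffL : ∀ z : X × Y, z ∈ a +ᵥ (L : Set (X × Y)) → z - (xb, yb₂) ∈ L := by
    intro z hz
    obtain ⟨l, hl, hal⟩ := Set.mem_vadd_set.mp hz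
    rw [vadd_eq_add] at hal
    have : z - (xb, yb₂) = l - l0 := by rw [← hal, ← hal0]; abel
    rw [this]
    exact L.sub_mem hl hl0
  have haddL : ∀ w : X × Y, w ∈ L → ((xb, yb₂) : X × Y) + w ∈ a +ᵥ (L : Set (X × Y)) := by
    intro w hw
    refine Set.mem_vadd_set.mpr ⟨l0 + w, L.add_mem hl0 hw, ?_⟩
    rw [vadd_eq_add, ← add_assoc, hal0]
  ext u
  constructor
  · -- hard direction
    intro hu
    have star : ∀ x y₁ y₂, y₁ ∈ F₁ x → y₂ ∈ F₂ x →
        u (x - xb) - v (y₁ - yb₁) - v (y₂ - yb₂) ≤ 0 := by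
      intro x y₁ y₂ hy₁ hy₂
      have h0 := hu x (y₁ + y₂) (Set.mem_add.mpr ⟨y₁, hy₁, y₂, hy₂, rfl⟩)
      have e : v (y₁ + y₂ - (yb₁ + yb₂)) = v (y₁ - yb₁) + v (y₂ - yb₂) := by
        rw [← map_add]; congr 1; abel
      rw [e] at h0
      linarith
    -- functionals on ↥L × Y
    set πL : ↥L × Y →ₗ[ℝ] X × Y := L.subtype.comp (LinearMap.fst ℝ ↥L Y) with hπL
    set e1 : ↥L × Y →ₗ[ℝ] X := (LinearMap.fst ℝ X Y).comp πL with he1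
    set e2 : ↥L × Y →ₗ[ℝ] Y := LinearMap.snd ℝ ↥L Y with he2
    set e3 : ↥L × Y →ₗ[ℝ] Y := (LinearMap.snd ℝ X Y).comp πL with he3
    set Pf : Fin m → (↥L × Y →ₗ[ℝ] ℝ) :=
      fun i => (p i : X × Y →ₗ[ℝ] ℝ).comp (e1.prod e2) with hPf
    set Qf : Fin k → (↥L × Y →ₗ[ℝ] ℝ) :=
      fun j => (q j : X × Y →ₗ[ℝ] ℝ).comp πL with hQf
    set Gf : ↥L × Y →ₗ[ℝ] ℝ :=
      (u : X →ₗ[ℝ] ℝ).comp e1 - (v : Y →ₗ[ℝ] ℝ).comp e2 - (v : Y →ₗ[ℝ] ℝ).comp e3 with hGf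
    have hPfapp : ∀ (i : Fin m) (w : ↥L) (dy : Y),
        Pf i (w, dy) = p i ((w : X × Y).1, dy) := by
      intro i w dy
      rfl
    have hQfapp : ∀ (j : Fin k) (w : ↥L) (dy : Y),
        Qf j (w, dy) = q j (w : X × Y) := by
      intro j w dy
      rfl
    have hGfapp : ∀ (w : ↥L) (dy : Y),
        Gf (w, dy) = u (w : X × Y).1 - v dy - v (w : X × Y).2 := by
      intro w dy
      rfl
    set f : ({i : Fin m // p i (xb, yb₁) = α i} ⊕ {j : Fin k // q j (xb, yb₂) = β j}) →
        (↥L × Y →ₗ[ℝ] ℝ) :=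
      Sum.elim (fun i => Pf i.1) (fun j => Qf j.1) with hf
    have hyp : ∀ w, (∀ idx, f idx w ≤ 0) → Gf w ≤ 0 := by
      rintro ⟨⟨⟨dx, dy2⟩, hdL⟩, dy1⟩ hdv
      have hdvP : ∀ (i : Fin m), p i (xb, yb₁) = α i → p i (dx, dy1) ≤ 0 := by
        intro i hi
        have := hdv (Sum.inl ⟨i, hi⟩)
        rwa [hf, Sum.elim_inl, hPfapp] at this
      have hdvQ : ∀ (j : Fin k), q j (xb, yb₂) = β j → q j (dx, dy2) ≤ 0 := by
        intro j hj
        have := hdv (Sum.inr ⟨j, hj⟩)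
        rwa [hf, Sum.elim_inr, hQfapp] at this
      obtain ⟨t, ht, hts⟩ := my_small_t
        (Sum.elim (fun (i : Fin m) t => t * p i (dx, dy1) ≤ α i - p i (xb, yb₁))
          (fun (j : Fin k) t => t * q j (dx, dy2) ≤ β j - q j (xb, yb₂)))
        (by
          rintro (i | j)
          · exact my_small_step _ _ (by linarith [h1g i]) (fun h0 => hdvP i (by linarith))
          · exact my_small_step _ _ (by linarith [h2q j]) (fun h0 => hdvQ j (by linarith)))
      have htP : ∀ i, t * p i (dx, dy1) ≤ α i - p i (xb, yb₁) := fun i => hts (Sum.inl i)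
      have htQ : ∀ j, t * q j (dx, dy2) ≤ β j - q j (xb, yb₂) := fun j => hts (Sum.inr j)
      have hy1mem : (yb₁ + t • dy1) ∈ F₁ (xb + t • dx) := by
        have : ((xb + t • dx, yb₁ + t • dy1) : X × Y) ∈ gph F₁ := by
          rw [hp]
          intro i
          have e : ((xb + t • dx, yb₁ + t • dy1) : X × Y) = (xb, yb₁) + t • (dx, dy1) := by
            simp [Prod.ext_iff]
          rw [e, map_add, map_smul, smul_eq_mul]
          linarith [htP i]
        exact this
      have hy2mem : (yb₂ + t • dy2) ∈ F₂ (xb + t • dx) := by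
        have : ((xb + t • dx, yb₂ + t • dy2) : X × Y) ∈ gph F₂ := by
          rw [hPQ]
          have e : ((xb + t • dx, yb₂ + t • dy2) : X × Y) = (xb, yb₂) + t • (dx, dy2) := by
            simp [Prod.ext_iff]
          constructor
          · intro j
            show q j (xb + t • dx, yb₂ + t • dy2) ≤ β j
            rw [e, map_add, map_smul, smul_eq_mul]
            linarith [htQ j]
          · rw [e]
            exact haddL _ (L.smul_mem t hdL)
        exact this
      have hstep := star _ _ _ hy1mem hy2mem
      simp only [add_sub_cancel_left] at hstep
      have hA : t * (u dx - v dy1 - v dy2) ≤ 0 := by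
        have e : u (t • dx) - v (t • dy1) - v (t • dy2) = t * (u dx - v dy1 - v dy2) := by
          rw [map_smul, map_smul, map_smul, smul_eq_mul, smul_eq_mul, smul_eq_mul]
          ring
        linarith [hstep, e.symm.le, e.le]
      have hfin : u dx - v dy1 - v dy2 ≤ 0 :=
        le_of_mul_le_mul_left (by rw [mul_zero]; exact hA) ht
      exact hfin
    obtain ⟨lam, hlam, hdec⟩ := my_farkas_s12 f Gf hyp
    set u₁ : X →L[ℝ] ℝ :=
      ∑ i : {i : Fin m // p i (xb, yb₁) = α i},
        lam (Sum.inl i) • ((p i.1).comp (ContinuousLinearMap.inl ℝ X Y)) with hu₁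
    have hu₁app : ∀ x : X,
        u₁ x = ∑ i : {i : Fin m // p i (xb, yb₁) = α i}, lam (Sum.inl i) * p i.1 (x, 0) := by
      intro x
      rw [hu₁]
      simp [ContinuousLinearMap.sum_apply]
    have hdec' : ∀ (w : ↥L) (dy : Y),
        u (w : X × Y).1 - v dy - v (w : X × Y).2 =
          (∑ i : {i : Fin m // p i (xb, yb₁) = α i},
            lam (Sum.inl i) * p i.1 ((w : X × Y).1, dy)) +
          ∑ j : {j : Fin k // q j (xb, yb₂) = β j},
            lam (Sum.inr j) * q j.1 (w : X × Y) := by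
      intro w dy
      have := hdec (w, dy)
      rw [hGfapp] at this
      rw [this, Fintype.sum_sum_type]
      rfl
    have hdag : ∀ dy : Y,
        ∑ i : {i : Fin m // p i (xb, yb₁) = α i},
          lam (Sum.inl i) * p i.1 ((0 : X), dy) = - v dy := by
      intro dy
      have hd0 : u (0 : X) - v dy - v (0 : Y) =
          (∑ i : {i : Fin m // p i (xb, yb₁) = α i},
            lam (Sum.inl i) * p i.1 ((0 : X), dy)) +
          ∑ j : {j : Fin k // q j (xb, yb₂) = β j},
            lam (Sum.inr j) * q j.1 ((0 : X × Y)) := hdec' 0 dy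
      simp only [map_zero, mul_zero, Finset.sum_const_zero, add_zero, zero_sub, sub_zero] at hd0
      linarith [hd0]
    have hu1sub : ∀ x y, u₁ (x - xb) - v (y - yb₁) =
        ∑ i : {i : Fin m // p i (xb, yb₁) = α i},
          lam (Sum.inl i) * (p i.1 (x, y) - p i.1 (xb, yb₁)) := by
      intro x y
      have h2 := hdag (y - yb₁)
      have e0 : u₁ (x - xb) - v (y - yb₁) =
          (∑ i : {i : Fin m // p i (xb, yb₁) = α i}, lam (Sum.inl i) * p i.1 (x - xb, 0)) +
          ∑ i : {i : Fin m // p i (xb, yb₁) = α i}, lam (Sum.inl i) * p i.1 ((0 : X), y - yb₁) := by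
        rw [hu₁app, h2]; ring
      rw [e0, ← Finset.sum_add_distrib]
      apply Finset.sum_congr rfl
      intro i _
      have e1 : ((x - xb, (0 : Y)) : X × Y) + ((0 : X), y - yb₁) = (x, y) - (xb, yb₁) := by
        simp [Prod.ext_iff]
      rw [← mul_add, ← map_add, e1, map_sub]
    have mem1 : u₁ ∈ coderiv F₁ xb yb₁ v := by
      intro x y hy
      have hxy : ∀ i, p i (x, y) ≤ α i := by
        have : ((x, y) : X × Y) ∈ gph F₁ := hy
        rwa [hp] at this
      rw [hu1sub x y]
      apply Finset.sum_nonpos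
      intro i _
      apply mul_nonpos_of_nonneg_of_nonpos (hlam _)
      have hi := i.2
      linarith [hxy i.1]
    have mem2 : (u - u₁) ∈ coderiv F₂ xb yb₂ v := by
      intro x y hy
      have hyg : ((x, y) : X × Y) ∈ gph F₂ := hy
      rw [hPQ] at hyg
      obtain ⟨hyq, hyL⟩ := hyg
      have hyq : ∀ j, q j (x, y) ≤ β j := hyq
      have hdL : ((x, y) : X × Y) - (xb, yb₂) ∈ L := hdiffL _ hyL
      have hdL' : ((x - xb, y - yb₂) : X × Y) ∈ L := by
        rwa [Prod.mk_sub_mk] at hdL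
      have hd2 : u (x - xb) - v (0 : Y) - v (y - yb₂) =
          (∑ i : {i : Fin m // p i (xb, yb₁) = α i},
            lam (Sum.inl i) * p i.1 (x - xb, (0 : Y))) +
          ∑ j : {j : Fin k // q j (xb, yb₂) = β j},
            lam (Sum.inr j) * q j.1 ((x - xb, y - yb₂) : X × Y) :=
        hdec' ⟨(x - xb, y - yb₂), hdL'⟩ 0
      simp only [map_zero, sub_zero] at hd2
      have hA2 : ∑ i : {i : Fin m // p i (xb, yb₁) = α i},
          lam (Sum.inl i) * p i.1 (x - xb, (0 : Y)) = u₁ (x - xb) := (hu₁app (x - xb)).symm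
      have hB2 : ∑ j : {j : Fin k // q j (xb, yb₂) = β j},
          lam (Sum.inr j) * q j.1 ((x - xb, y - yb₂) : X × Y) ≤ 0 := by
        apply Finset.sum_nonpos
        intro j _
        apply mul_nonpos_of_nonneg_of_nonpos (hlam _)
        have e1 : ((x - xb, y - yb₂) : X × Y) = (x, y) - (xb, yb₂) := by
          rw [Prod.mk_sub_mk]
        rw [e1, map_sub]
        have hj := j.2
        linarith [hyq j.1]
      rw [ContinuousLinearMap.sub_apply]
      linarith [hd2, hA2, hB2]
    exact Set.mem_add.mpr ⟨u₁, mem1, u - u₁, mem2, by abel⟩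
  · -- easy direction
    intro hu
    obtain ⟨u₁, hu₁, u₂, hu₂, rfl⟩ := Set.mem_add.mp hu
    intro x y hy
    obtain ⟨y₁, hy₁, y₂, hy₂, rfl⟩ := Set.mem_add.mp hy
    have A := hu₁ x y₁ hy₁
    have B := hu₂ x y₂ hy₂
    have e : v (y₁ + y₂ - (yb₁ + yb₂)) = v (y₁ - yb₁) + v (y₂ - yb₂) := by
      rw [← map_add]; congr 1; abel
    rw [ContinuousLinearMap.add_apply, e]
    linarith
end

section
/- Let B : X → Y be an affine mapping B(x) = A(x) + b with A continuous linear, and f : Y → (−∞, ∞] a polyhedral convex function. Then for every x̄ ∈ dom(f ∘ B), ∂(f ∘ B)(x̄) = A*(∂f(B(x̄))), where A* is the adjoint of A. -/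
open Set Pointwise

lemma farkas_s15 {V : Type*} [AddCommGroup V] [Module ℝ V] [TopologicalSpace V]
    (n : ℕ) (ψ : Fin n → V →L[ℝ] ℝ) (u : V →L[ℝ] ℝ)
    (h : ∀ d, (∀ i, ψ i d ≤ 0) → u d ≤ 0) :
    ∃ lam : Fin n → ℝ, (∀ i, 0 ≤ lam i) ∧ u = ∑ i, lam i • ψ i := by
  induction n generalizing u with
  | zero =>
    refine ⟨fun i => 0, fun i => le_refl 0, ?_⟩
    ext d
    have h1 := h d (fun i => i.elim0)
    have h2 := h (-d) (fun i => i.elim0)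
    simp only [map_neg] at h2
    simp only [Finset.univ_eq_empty, Finset.sum_empty, ContinuousLinearMap.zero_apply]
    linarith
  | succ n IH =>
    by_cases hc : ∀ d, (∀ i : Fin n, ψ i.castSucc d ≤ 0) → u d ≤ 0
    · obtain ⟨μ, hμ, hu⟩ := IH (fun i => ψ i.castSucc) u hc
      refine ⟨Fin.snoc μ 0, ?_, ?_⟩
      · intro i
        refine Fin.lastCases ?_ ?_ i
        · simp
        · intro j; simp [hμ j]
      · rw [Fin.sum_univ_castSucc]
        simp [hu]
    · push_neg at hc
      obtain ⟨d₀, hd₀, hud₀⟩ := hc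
      have hL : 0 < ψ (Fin.last n) d₀ := by
        by_contra hLn
        push_neg at hLn
        refine absurd (h d₀ ?_) (not_le.mpr hud₀)
        intro i
        refine Fin.lastCases ?_ ?_ i
        · exact hLn
        · exact hd₀
      set d₁ : V := (ψ (Fin.last n) d₀)⁻¹ • d₀ with hd₁def
      have hLd₁ : ψ (Fin.last n) d₁ = 1 := by
        simp [hd₁def, inv_mul_cancel₀ (ne_of_gt hL)]
      have hd₁ : ∀ i : Fin n, ψ i.castSucc d₁ ≤ 0 := by
        intro i
        simp only [hd₁def, map_smul, smul_eq_mul]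
        exact mul_nonpos_of_nonneg_of_nonpos (le_of_lt (inv_pos.mpr hL)) (hd₀ i)
      have hud₁ : 0 < u d₁ := by
        simp only [hd₁def, map_smul, smul_eq_mul]
        exact mul_pos (inv_pos.mpr hL) hud₀
      set ψ' : Fin n → V →L[ℝ] ℝ :=
        fun i => ψ i.castSucc - (ψ i.castSucc d₁) • ψ (Fin.last n) with hψ'def
      set u' : V →L[ℝ] ℝ := u - (u d₁) • ψ (Fin.last n) with hu'def
      have hkey : ∀ d, (∀ i, ψ' i d ≤ 0) → u' d ≤ 0 := by
        intro d hd
        have hfeas : ∀ i : Fin (n+1), ψ i (d - (ψ (Fin.last n) d) • d₁) ≤ 0 := by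
          intro i
          refine Fin.lastCases ?_ ?_ i
          · simp [map_sub, map_smul, hLd₁]
          · intro j
            have := hd j
            simp only [hψ'def, ContinuousLinearMap.sub_apply,
              ContinuousLinearMap.smul_apply, smul_eq_mul] at this
            simp only [map_sub, map_smul, smul_eq_mul]
            linarith
        have := h _ hfeas
        simp only [map_sub, map_smul, smul_eq_mul] at this
        simp only [hu'def, ContinuousLinearMap.sub_apply,
          ContinuousLinearMap.smul_apply, smul_eq_mul]
        linarith
      obtain ⟨μ, hμ, hu'⟩ := IH ψ' u' hkey
      refine ⟨Fin.snoc μ (u d₁ - ∑ i, μ i * ψ i.castSucc d₁), ?_, ?_⟩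
      · intro i
        refine Fin.lastCases ?_ ?_ i
        · simp only [Fin.snoc_last]
          have hsum : ∑ i, μ i * ψ i.castSucc d₁ ≤ 0 :=
            Finset.sum_nonpos fun i _ =>
              mul_nonpos_of_nonneg_of_nonpos (hμ i) (hd₁ i)
          linarith
        · intro j; simp [hμ j]
      · ext d
        have hpt := congrArg (fun (φ : V →L[ℝ] ℝ) => φ d) hu'
        simp only [hu'def, hψ'def, ContinuousLinearMap.sub_apply,
          ContinuousLinearMap.smul_apply, smul_eq_mul, ContinuousLinearMap.sum_apply,
          ContinuousLinearMap.coe_sub', Pi.sub_apply] at hpt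
        rw [Fin.sum_univ_castSucc]
        simp only [Fin.snoc_castSucc, Fin.snoc_last, ContinuousLinearMap.add_apply,
          ContinuousLinearMap.sum_apply, ContinuousLinearMap.smul_apply, smul_eq_mul]
        have hexp : ∑ i : Fin n, μ i * (ψ i.castSucc d - ψ i.castSucc d₁ * ψ (Fin.last n) d)
            = ∑ i : Fin n, μ i * ψ i.castSucc d
              - (∑ i : Fin n, μ i * ψ i.castSucc d₁) * ψ (Fin.last n) d := by
          rw [Finset.sum_mul, ← Finset.sum_sub_distrib]
          congr 1; ext i; ring
        rw [hexp] at hpt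
        linarith

lemma subdiff_mem_iff {Y : Type*} [AddCommGroup Y] [Module ℝ Y] [TopologicalSpace Y]
    (f : Y → EReal) (hbot : ∀ y, f y ≠ ⊥) (yb : Y) (r : ℝ) (hr : f yb = (r : EReal))
    (g : Y →L[ℝ] ℝ) :
    g ∈ subdiff f yb ↔ ∀ y : Y, ∀ t : ℝ, f y ≤ (t : EReal) → g (y - yb) + r ≤ t := by
  constructor
  · intro h y t hyt
    have h2 := h y
    rw [hr] at h2
    have h3 : ((g (y - yb) + r : ℝ) : EReal) ≤ (t : EReal) := by
      rw [EReal.coe_add]; exact le_trans h2 hyt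
    exact_mod_cast h3
  · intro h y
    by_cases htop : f y = ⊤
    · rw [htop]; exact le_top
    · obtain ⟨s, hs⟩ : ∃ s : ℝ, f y = (s : EReal) := by
        have h1 := hbot y
        set z := f y with hz
        clear_value z
        induction z with
        | bot => exact absurd rfl h1
        | coe s => exact ⟨s, rfl⟩
        | top => exact absurd rfl htop
      rw [hr, hs, ← EReal.coe_add]
      exact_mod_cast h y s (le_of_eq hs)

variable {X : Type*} [AddCommGroup X] [Module ℝ X] [TopologicalSpace X]
  [IsTopologicalAddGroup X] [ContinuousSMul ℝ X] [LocallyConvexSpace ℝ X] [T2Space X]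
variable {Y : Type*} [AddCommGroup Y] [Module ℝ Y] [TopologicalSpace Y]
  [IsTopologicalAddGroup Y] [ContinuousSMul ℝ Y] [LocallyConvexSpace ℝ Y] [T2Space Y]
variable {Z : Type*} [AddCommGroup Z] [Module ℝ Z] [TopologicalSpace Z]
  [IsTopologicalAddGroup Z] [ContinuousSMul ℝ Z] [LocallyConvexSpace ℝ Z] [T2Space Z]

theorem subdifferential_affine_composition
    (A : X →L[ℝ] Y) (b : Y) (f : Y → EReal)
    (hbot : ∀ y, f y ≠ ⊥) (hf : IsPolyhedral (epi f))
    (xb : X) (hdom : f (A xb + b) ≠ ⊤) :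
    subdiff (fun x => f (A x + b)) xb =
      (fun g : Y →L[ℝ] ℝ => g.comp A) '' subdiff f (A xb + b) := by
  obtain ⟨m, F, α, hepi⟩ := hf
  obtain ⟨r, hr⟩ : ∃ r : ℝ, f (A xb + b) = (r : EReal) := by
    have h1 := hbot (A xb + b)
    set z := f (A xb + b) with hz
    clear_value z
    induction z with
    | bot => exact absurd rfl h1
    | coe s => exact ⟨s, rfl⟩
    | top => exact absurd rfl hdom
  have hmem : ∀ (y : Y) (t : ℝ), f y ≤ (t : EReal) ↔ ∀ i, F i (y, t) ≤ α i := by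
    intro y t
    have := Set.ext_iff.mp hepi (y, t)
    simpa [epi] using this
  have hybr : ∀ i, F i (A xb + b, r) ≤ α i := (hmem _ r).mp (le_of_eq hr)
  ext u
  constructor
  · intro hu
    have hu' : ∀ (x : X) (t : ℝ), f (A x + b) ≤ (t : EReal) → u (x - xb) + r ≤ t :=
      (subdiff_mem_iff (fun x => f (A x + b)) (fun x => hbot _) xb r hr u).mp hu
    set ψ : Fin m → (X × ℝ) →L[ℝ] ℝ :=
      fun i => (F i).comp (A.prodMap (ContinuousLinearMap.id ℝ ℝ)) with hψdef
    have hψapp : ∀ i (p : X × ℝ), ψ i p = F i (A p.1, p.2) := by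
      intro i p; simp [hψdef, Prod.map]
    set χ : Fin m → (X × ℝ) →L[ℝ] ℝ :=
      fun i => if F i (A xb + b, r) = α i then ψ i else 0 with hχdef
    set w : (X × ℝ) →L[ℝ] ℝ :=
      u.comp (ContinuousLinearMap.fst ℝ X ℝ) - ContinuousLinearMap.snd ℝ X ℝ with hwdef
    have hwapp : ∀ p : X × ℝ, w p = u p.1 - p.2 := by
      intro p; simp [hwdef]
    have key : ∀ d : X × ℝ, (∀ i, χ i d ≤ 0) → w d ≤ 0 := by
      intro d hd
      have hact : ∀ i, F i (A xb + b, r) = α i → F i (A d.1, d.2) ≤ 0 := by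
        intro i hi
        have h2 := hd i
        rw [hχdef] at h2
        simp only at h2
        rw [if_pos hi] at h2
        rwa [hψapp] at h2
      set δ : Fin m → ℝ := fun i =>
        if 0 < F i (A d.1, d.2) then (α i - F i (A xb + b, r)) / F i (A d.1, d.2) else 1
        with hδdef
      set s : Finset ℝ := insert 1 (Finset.univ.image δ) with hsdef
      have hsne : s.Nonempty := ⟨1, Finset.mem_insert_self 1 _⟩
      set ε : ℝ := s.min' hsne with hεdef
      have hδpos : ∀ i, 0 < δ i := by
        intro i
        rw [hδdef]
        simp only
        by_cases hp : 0 < F i (A d.1, d.2)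
        · rw [if_pos hp]
          have hlt : F i (A xb + b, r) < α i := by
            rcases lt_or_eq_of_le (hybr i) with h1 | h1
            · exact h1
            · exact absurd (hact i h1) (not_le.mpr hp)
          exact div_pos (sub_pos.mpr hlt) hp
        · rw [if_neg hp]; norm_num
      have hεpos : 0 < ε := by
        have hm := s.min'_mem hsne
        rw [← hεdef, hsdef] at hm
        rcases Finset.mem_insert.mp hm with h1 | h1
        · rw [h1]; norm_num
        · obtain ⟨i, _, h2⟩ := Finset.mem_image.mp h1
          rw [← h2]; exact hδpos i
      have hεδ : ∀ i, ε ≤ δ i := fun i =>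
        s.min'_le _ (Finset.mem_insert_of_mem (Finset.mem_image_of_mem δ (Finset.mem_univ i)))
      have hfeas : f (A (xb + ε • d.1) + b) ≤ ((r + ε * d.2 : ℝ) : EReal) := by
        rw [hmem]
        intro i
        have harg : ((A (xb + ε • d.1) + b, (r + ε * d.2)) : Y × ℝ)
            = ((A xb + b, r) : Y × ℝ) + ε • (A d.1, d.2) := by
          simp only [Prod.smul_mk, Prod.mk_add_mk, Prod.mk.injEq, smul_eq_mul]
          refine ⟨?_, trivial⟩
          rw [map_add, map_smul]; abel
        rw [harg, map_add, map_smul, smul_eq_mul]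
        by_cases hp : 0 < F i (A d.1, d.2)
        · have h2 := hεδ i
          rw [hδdef] at h2
          simp only at h2
          rw [if_pos hp] at h2
          have h3 := (le_div_iff₀ hp).mp h2
          linarith
        · push_neg at hp
          have h3 : ε * F i (A d.1, d.2) ≤ 0 :=
            mul_nonpos_of_nonneg_of_nonpos (le_of_lt hεpos) hp
          linarith [hybr i]
      have h6 := hu' (xb + ε • d.1) (r + ε * d.2) hfeas
      have h4 : xb + ε • d.1 - xb = ε • d.1 := by abel
      rw [h4, map_smul, smul_eq_mul] at h6
      rw [hwapp d]
      have h5 : ε * u d.1 ≤ ε * d.2 := by linarith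
      have h7 : u d.1 ≤ d.2 := le_of_mul_le_mul_left h5 hεpos
      linarith
    obtain ⟨μ, hμ, hw⟩ := farkas_s15 m χ w key
    set lam : Fin m → ℝ := fun i => if F i (A xb + b, r) = α i then μ i else 0 with hlamdef
    have hlam0 : ∀ i, 0 ≤ lam i := by
      intro i
      rw [hlamdef]
      by_cases hi : F i (A xb + b, r) = α i
      · simp only [if_pos hi]; exact hμ i
      · simp only [if_neg hi]; exact le_refl 0
    have hw2 : w = ∑ i, lam i • ψ i := by
      rw [hw]
      apply Finset.sum_congr rfl
      intro i _
      rw [hχdef, hlamdef]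
      by_cases hi : F i (A xb + b, r) = α i
      · simp only [if_pos hi]
      · simp only [if_neg hi, smul_zero, zero_smul]
    have hwpt : ∀ (x : X) (t : ℝ), u x - t = ∑ i, lam i * F i (A x, t) := by
      intro x t
      have h2 := congrArg (fun (φ : (X × ℝ) →L[ℝ] ℝ) => φ (x, t)) hw2
      simp only [ContinuousLinearMap.sum_apply, ContinuousLinearMap.smul_apply,
        smul_eq_mul] at h2
      rw [hwapp (x, t)] at h2
      simp only [hψapp] at h2
      exact h2
    refine ⟨∑ i, lam i • ((F i).comp (ContinuousLinearMap.inl ℝ Y ℝ)), ?_, ?_⟩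
    · rw [subdiff_mem_iff f hbot (A xb + b) r hr]
      intro y t hyt
      have hyt' := (hmem y t).mp hyt
      have e1 : (∑ i, lam i • ((F i).comp (ContinuousLinearMap.inl ℝ Y ℝ))) (y - (A xb + b))
          = ∑ i, lam i * F i (y - (A xb + b), 0) := by
        simp [ContinuousLinearMap.sum_apply]
      have e2 : r - t = ∑ i, lam i * F i (0, t - r) := by
        have h3 := hwpt 0 (t - r)
        simp only [map_zero, zero_sub] at h3
        have h4 : ∑ i, lam i * F i ((0 : Y), t - r) = ∑ i, lam i * F i (A 0, t - r) := by
          simp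
        rw [h4]
        linarith
      have e3 : ∑ i, lam i * F i (y - (A xb + b), 0) + ∑ i, lam i * F i (0, t - r)
          = ∑ i, lam i * (F i (y, t) - F i (A xb + b, r)) := by
        rw [← Finset.sum_add_distrib]
        apply Finset.sum_congr rfl
        intro i _
        have h5 : ((y - (A xb + b), (0 : ℝ)) : Y × ℝ) + ((0 : Y), t - r)
            = ((y, t) : Y × ℝ) - ((A xb + b, r) : Y × ℝ) := by
          simp only [Prod.mk_add_mk, Prod.mk_sub_mk, Prod.mk.injEq]
          constructor
          · abel
          · ring
        rw [← mul_add, ← map_add, h5, map_sub]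
      have e4 : ∑ i, lam i * (F i (y, t) - F i (A xb + b, r)) ≤ 0 := by
        apply Finset.sum_nonpos
        intro i _
        by_cases hi : F i (A xb + b, r) = α i
        · have h6 : F i (y, t) - F i (A xb + b, r) ≤ 0 := by
            rw [hi]; linarith [hyt' i]
          exact mul_nonpos_of_nonneg_of_nonpos (hlam0 i) h6
        · rw [hlamdef]
          simp only [if_neg hi, zero_mul, le_refl]
      rw [e1]
      linarith
    · ext x
      have h3 := hwpt x 0
      simp only [sub_zero] at h3
      simp only [ContinuousLinearMap.coe_comp', Function.comp_apply,
        ContinuousLinearMap.sum_apply, ContinuousLinearMap.smul_apply,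
        ContinuousLinearMap.inl_apply, smul_eq_mul]
      exact h3.symm
  · rintro ⟨g, hg, rfl⟩
    intro x
    have h1 := hg (A x + b)
    have h2 : A x + b - (A xb + b) = A (x - xb) := by rw [map_sub]; abel
    rw [h2] at h1
    simpa using h1
end
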